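/- arXiv:2107.02055 — 6 statements merged into one kernel-verified Lean document; each statement's English description precedes it below -/
import Mathlib

section
/- For fixed z > 0, λ = e^{-z}, μ = λ(e^{iϑ} - 1), and w > 0 with K = w/z a positive integer, the identity ∑_{0 ≤ k ≤ K} μ^k (w - kz)^k / k! = (1/(2πi)) ∮_{|ζ|=R} (1 - e^{-(K+1)μzζ}/ζ^{K+1}) e^{μwζ} / (ζ - e^{-μzζ}) dζ holds for any R > 0 such that the function ζ ↦ ζ - e^{-μzζ} has no zeros on |ζ| = R. -/
open Complex Finset Real

private lemma expMul_series (a : ℂ) :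
    HasFPowerSeriesOnBall (fun ζ : ℂ => Complex.exp (a * ζ))
      (FormalMultilinearSeries.ofScalars ℂ (fun n => a ^ n / n.factorial)) 0 ⊤ := by
  constructor
  · rw [FormalMultilinearSeries.radius_eq_top_of_summable_norm]
    intro r
    apply Summable.congr (Real.summable_pow_div_factorial (‖a‖ * r))
    intro n
    rw [FormalMultilinearSeries.ofScalars_norm, norm_div, norm_pow]
    rw [Complex.norm_natCast]
    rw [mul_pow]
    ring
  · exact ENNReal.zero_lt_top
  · intro y _
    simp only [FormalMultilinearSeries.ofScalars_apply_eq, smul_eq_mul, zero_add]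
    have : ∀ n : ℕ, a ^ n / (n.factorial : ℂ) * y ^ n = (a * y) ^ n / (n.factorial : ℂ) := by
      intro n; rw [mul_pow]; ring
    rw [funext this]
    rw [Complex.exp_eq_exp_ℂ]
    exact NormedSpace.expSeries_div_hasSum_exp (a * y)

private lemma circle_exp_div_pow (a : ℂ) {R : ℝ} (hR : 0 < R) (n : ℕ) :
    (∮ ζ in C(0, R), Complex.exp (a * ζ) / ζ ^ (n + 1))
      = 2 * Real.pi * I * a ^ n / n.factorial := by
  set f : ℂ → ℂ := fun ζ => Complex.exp (a * ζ) with hf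
  have hd : Differentiable ℂ f := (differentiable_id.const_mul a).cexp
  have hR' : (0 : NNReal) < R.toNNReal := by simpa using hR
  have h1 := hd.hasFPowerSeriesOnBall 0 hR'
  have heq := h1.hasFPowerSeriesAt.eq_formalMultilinearSeries (expMul_series a).hasFPowerSeriesAt
  have h2 := congrFun heq n
  have h3 := congrArg (fun p => p (fun _ => (1 : ℂ))) h2
  rw [cauchyPowerSeries_apply, FormalMultilinearSeries.ofScalars_apply_eq] at h3
  simp only [one_pow, smul_eq_mul, mul_one, Real.coe_toNNReal _ hR.le] at h3
  have hπ : (2 * (Real.pi : ℂ) * I) ≠ 0 := by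
    simp [Real.pi_ne_zero, Complex.I_ne_zero]
  have h4 : (∮ ζ in C(0, R), ((1 : ℂ) / (ζ - 0)) ^ n * ((ζ - 0)⁻¹ * f ζ))
      = 2 * Real.pi * I * a ^ n / n.factorial := by
    rw [mul_div_assoc, ← h3]; field_simp
  rw [← h4]
  congr 1
  funext ζ
  rw [hf]
  rw [sub_zero, one_div, inv_pow, div_eq_mul_inv, pow_succ, mul_inv]
  ring

private lemma circleIntegral_finset_sum {ι : Type*} (s : Finset ι) (f : ι → ℂ → ℂ) (c : ℂ)
    (R : ℝ) (h : ∀ i ∈ s, CircleIntegrable (f i) c R) :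
    (∮ z in C(c, R), ∑ i ∈ s, f i z) = ∑ i ∈ s, ∮ z in C(c, R), f i z := by
  simp only [circleIntegral, smul_sum]
  exact intervalIntegral.integral_finset_sum fun i hi => (h i hi).out

/-- contour integral representation of
`∑_{0 ≤ k ≤ K} μ^k (w - kz)^k / k!` over the circle `|ζ| = R`. -/
theorem stmt_1 (z : ℝ) (hz : 0 < z) (ϑ : ℝ) (w : ℝ) (hw : 0 < w) (K : ℕ) (hK : 1 ≤ K)
    (hKz : w = K * z) (R : ℝ) (hR : 0 < R)
    (hzero : ∀ ζ : ℂ, ‖ζ‖ = R →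
      ζ - Complex.exp (-((Real.exp (-z) : ℂ) * (Complex.exp (I * ϑ) - 1) * z * ζ)) ≠ 0) :
    (∑ k ∈ Finset.range (K + 1),
        ((Real.exp (-z) : ℂ) * (Complex.exp (I * ϑ) - 1)) ^ k * ((w : ℂ) - k * z) ^ k
          / (Nat.factorial k))
      = (1 / (2 * Real.pi * I)) *
        (∮ ζ in C(0, R),
          (1 - Complex.exp (-((K + 1 : ℕ) * ((Real.exp (-z) : ℂ) * (Complex.exp (I * ϑ) - 1))
                * z * ζ)) / ζ ^ (K + 1))
            * Complex.exp ((Real.exp (-z) : ℂ) * (Complex.exp (I * ϑ) - 1) * w * ζ)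
            / (ζ - Complex.exp (-((Real.exp (-z) : ℂ) * (Complex.exp (I * ϑ) - 1) * z * ζ)))) := by
  set μ : ℂ := (Real.exp (-z) : ℂ) * (Complex.exp (I * ϑ) - 1) with hμ
  have hπ : (2 * (Real.pi : ℂ) * I) ≠ 0 := by
    simp [Real.pi_ne_zero, Complex.I_ne_zero]
  -- Step 1: rewrite the contour integrand as a finite sum on the circle
  have step1 : (∮ ζ in C(0, R),
      (1 - Complex.exp (-((K + 1 : ℕ) * μ * z * ζ)) / ζ ^ (K + 1))
        * Complex.exp (μ * w * ζ) / (ζ - Complex.exp (-(μ * z * ζ))))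
      = ∮ ζ in C(0, R), ∑ j ∈ Finset.range (K + 1),
          Complex.exp (μ * ((w : ℂ) - j * z) * ζ) / ζ ^ (j + 1) := by
    apply circleIntegral.integral_congr hR.le
    intro ζ hζ
    have hζR : ‖ζ‖ = R := by
      simpa [Complex.dist_eq] using hζ
    have hζ0 : ζ ≠ 0 := by
      intro h; rw [h] at hζR; simp at hζR; exact hR.ne' hζR.symm
    have hden : ζ - Complex.exp (-(μ * z * ζ)) ≠ 0 := hzero ζ hζR
    set e : ℂ := Complex.exp (-(μ * z * ζ)) with he
    set E1 : ℂ := Complex.exp (μ * w * ζ) with hE1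
    have key1 : Complex.exp (-((K + 1 : ℕ) * μ * z * ζ)) = e ^ (K + 1) := by
      rw [he, ← Complex.exp_nat_mul]
      congr 1
      push_cast
      ring
    have key2 : ∀ j : ℕ, Complex.exp (μ * ((w : ℂ) - j * z) * ζ) = E1 * e ^ j := by
      intro j
      rw [hE1, he, ← Complex.exp_nat_mul, ← Complex.exp_add]
      congr 1
      push_cast
      ring
    have hg := geom_sum₂_mul ζ e (K + 1)
    simp only [Nat.add_sub_cancel] at hg
    have hζpow : ζ ^ (K + 1) ≠ 0 := pow_ne_zero _ hζ0
    simp only [key1, key2]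
    have l1 : (1 - e ^ (K + 1) / ζ ^ (K + 1)) * E1 / (ζ - e)
        = E1 * (∑ i ∈ Finset.range (K + 1), ζ ^ i * e ^ (K - i)) / ζ ^ (K + 1) := by
      rw [div_eq_div_iff hden hζpow]
      field_simp
      linear_combination -E1 * hg
    rw [l1]
    rw [mul_sum, sum_div]
    rw [← Finset.sum_range_reflect (fun j => E1 * e ^ j / ζ ^ (j + 1)) (K + 1)]
    apply Finset.sum_congr rfl
    intro i hi
    have hiK : i ≤ K := Nat.lt_succ_iff.mp (Finset.mem_range.mp hi)
    have h2 : K + 1 = (K - i + 1) + i := by omega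
    rw [show K + 1 - 1 - i = K - i from by omega]
    rw [show ζ ^ (K + 1) = ζ ^ (K - i + 1) * ζ ^ i by rw [← pow_add, ← h2]]
    have hpi : ζ ^ i ≠ 0 := pow_ne_zero _ hζ0
    rw [mul_comm (ζ ^ (K - i + 1)) (ζ ^ i),
      show E1 * (ζ ^ i * e ^ (K - i)) = ζ ^ i * (E1 * e ^ (K - i)) by ring,
      mul_div_mul_left _ _ hpi]
  -- Step 2: integrability of individual terms
  have hint : ∀ j ∈ Finset.range (K + 1),
      CircleIntegrable (fun ζ : ℂ => Complex.exp (μ * ((w : ℂ) - j * z) * ζ) / ζ ^ (j + 1)) 0 R := by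
    intro j _
    apply ContinuousOn.circleIntegrable hR.le
    apply ContinuousOn.div
    · exact (Complex.continuous_exp.comp (by fun_prop)).continuousOn
    · exact (continuous_pow _).continuousOn
    · intro ζ hζ
      apply pow_ne_zero
      intro h
      rw [Metric.mem_sphere, h] at hζ
      simp at hζ
      exact hR.ne' hζ.symm
  -- Step 3: put everything together
  rw [step1, circleIntegral_finset_sum _ _ _ _ hint]
  rw [Finset.mul_sum]
  apply Finset.sum_congr rfl
  intro k _
  rw [circle_exp_div_pow (μ * ((w : ℂ) - k * z)) hR k]
  rw [show (1 : ℂ) / (2 * Real.pi * I)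
        * (2 * Real.pi * I * (μ * ((w : ℂ) - k * z)) ^ k / (k.factorial : ℂ))
      = (μ * ((w : ℂ) - k * z)) ^ k / (k.factorial : ℂ) from by
    rw [one_div, mul_div_assoc, ← mul_assoc, inv_mul_cancel₀ hπ, one_mul]]
  rw [hμ, mul_pow, mul_pow, mul_pow]
end

section
/- For z > 0, λ = e^{-z}, ϑ real with |ϑ| sufficiently small, and μ = λ(e^{iϑ} - 1), the equation ζ = e^{-μzζ} has a unique solution β with |β| < 1/|ϑ| (for |ϑ| small enough), and β = 1 - μz + O(ϑ²). -/
open Complex Real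

lemma aux_theta (ϑ : ℝ) : ‖Complex.exp (I * ϑ) - 1‖ ≤ |ϑ| := by
  have h1 : ‖Complex.exp (I * ϑ) - 1‖ ^ 2 ≤ ϑ ^ 2 := by
    rw [Complex.sq_norm, Complex.normSq_apply]
    have hre : (Complex.exp (I * ϑ) - 1).re = Real.cos ϑ - 1 := by
      simp [mul_comm I (ϑ : ℂ), Complex.exp_ofReal_mul_I_re]
    have him : (Complex.exp (I * ϑ) - 1).im = Real.sin ϑ := by
      simp [mul_comm I (ϑ : ℂ), Complex.exp_ofReal_mul_I_im]
    rw [hre, him]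
    have h2 := Real.sin_sq_le_sq (x := ϑ / 2)
    have h3 := Real.sin_sq_add_cos_sq (ϑ / 2)
    have h4 : Real.cos (ϑ/2) ^ 2 = 1/2 + Real.cos ϑ / 2 := by
      have := Real.cos_sq (ϑ/2); rwa [show 2*(ϑ/2) = ϑ by ring] at this
    have h5 := Real.sin_sq_add_cos_sq ϑ
    nlinarith
  have h0 : (0:ℝ) ≤ ‖Complex.exp (I * ϑ) - 1‖ := norm_nonneg _
  nlinarith [abs_nonneg ϑ, _root_.sq_abs ϑ]

lemma aux_zexp (z : ℝ) (hz : 0 < z) : z * Real.exp (-z) ≤ 1 / 2 := by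
  have h1 := Real.add_one_le_exp (z / 2)
  have h2 : Real.exp (z / 2) * Real.exp (z / 2) = Real.exp z := by
    rw [← Real.exp_add]; ring_nf
  have h3 : Real.exp z * Real.exp (-z) = 1 := by
    rw [← Real.exp_add]; simp
  have h4 : 0 < Real.exp (-z) := Real.exp_pos _
  have h5 : 0 < Real.exp z := Real.exp_pos _
  nlinarith [sq_nonneg (z / 2 - 1)]

lemma aux_exp_half : Real.exp (1 / 2) ≤ 2 := by
  have h1 : Real.exp (1 / 2) * Real.exp (1 / 2) = Real.exp 1 := by
    rw [← Real.exp_add]; norm_num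
  nlinarith [Real.exp_pos (1/2 : ℝ), Real.exp_one_lt_d9]

lemma aux_abs_exp_le (w : ℂ) : ‖Complex.exp w‖ ≤ Real.exp (‖w‖) := by
  rw [Complex.norm_exp]
  exact Real.exp_le_exp.2 (le_trans (le_abs_self _) (Complex.abs_re_le_norm w))

/-- Lipschitz-type estimate for `ζ ↦ exp (-(a ζ))`. -/
lemma aux_lip (a x y : ℂ) (h : ‖a * (x - y)‖ ≤ 1) :
    ‖Complex.exp (-(a * x)) - Complex.exp (-(a * y))‖ ≤
      2 * Real.exp (‖a * y‖) * ‖a * (x - y)‖ := by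
  have e1 : Complex.exp (-(a * x)) - Complex.exp (-(a * y)) =
      Complex.exp (-(a * y)) * (Complex.exp (-(a * (x - y))) - 1) := by
    rw [mul_sub, ← Complex.exp_add, mul_one]; ring_nf
  rw [e1, norm_mul]
  have h2 : ‖Complex.exp (-(a * (x - y))) - 1‖ ≤ 2 * ‖a * (x - y)‖ := by
    have := Complex.norm_exp_sub_one_le (x := -(a * (x - y))) (by simpa using h)
    simpa using this
  have h3 : ‖Complex.exp (-(a * y))‖ ≤ Real.exp (‖a * y‖) := by
    have := aux_abs_exp_le (-(a * y)); simpa using this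
  have h4 : (0:ℝ) ≤ ‖a * (x - y)‖ := norm_nonneg _
  calc ‖Complex.exp (-(a * y))‖ * ‖Complex.exp (-(a * (x - y))) - 1‖
      ≤ Real.exp (‖a * y‖) * (2 * ‖a * (x - y)‖) := by
        apply mul_le_mul h3 h2 (norm_nonneg _) (Real.exp_pos _).le
    _ = 2 * Real.exp (‖a * y‖) * ‖a * (x - y)‖ := by ring

/-- for `|ϑ|` small and nonzero, the equation `ζ = e^{-μzζ}` with
`μ = λ(e^{iϑ}-1)` has a unique solution `β` in `|β| < 1/|ϑ|`, and `β = 1 - μz + O(ϑ²)`. -/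
theorem stmt_4 (z : ℝ) (hz : 0 < z) :
    ∃ ϑ₀ > 0, ∃ C > 0, ∀ ϑ : ℝ, ϑ ≠ 0 → |ϑ| ≤ ϑ₀ →
      (∃! β : ℂ, ‖β‖ < 1 / |ϑ| ∧
          β = Complex.exp (-((Real.exp (-z) : ℂ) * (Complex.exp (I * ϑ) - 1) * z * β))) ∧
      ∀ β : ℂ, ‖β‖ < 1 / |ϑ| →
        β = Complex.exp (-((Real.exp (-z) : ℂ) * (Complex.exp (I * ϑ) - 1) * z * β)) →
        ‖β - (1 - (Real.exp (-z) : ℂ) * (Complex.exp (I * ϑ) - 1) * z)‖ ≤ C * ϑ ^ 2 := by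
  refine ⟨1/4, by norm_num, 2, by norm_num, fun ϑ hϑ0 hϑ4 => ?_⟩
  have hϑpos : 0 < |ϑ| := abs_pos.2 hϑ0
  set a : ℂ := (Real.exp (-z) : ℂ) * (Complex.exp (I * ϑ) - 1) * (z : ℂ) with ha_def
  -- bound on |a|
  have ha : ‖a‖ ≤ |ϑ| / 2 := by
    have h1 : ‖a‖ = Real.exp (-z) * ‖Complex.exp (I * ϑ) - 1‖ * z := by
      rw [ha_def, norm_mul, norm_mul, Complex.norm_real, Complex.norm_real, Real.norm_eq_abs, Real.norm_eq_abs,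
        abs_of_pos (Real.exp_pos _), abs_of_pos hz]
    rw [h1]
    have h2 := aux_theta ϑ
    have h3 := aux_zexp z hz
    calc Real.exp (-z) * ‖Complex.exp (I * ϑ) - 1‖ * z
        = (z * Real.exp (-z)) * ‖Complex.exp (I * ϑ) - 1‖ := by ring
      _ ≤ (1/2) * |ϑ| := by
          apply mul_le_mul h3 h2 (norm_nonneg _) (by norm_num)
      _ = |ϑ| / 2 := by ring
  have ha8 : ‖a‖ ≤ 1 / 8 := le_trans ha (by linarith)
  have hann : (0:ℝ) ≤ ‖a‖ := norm_nonneg _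
  -- any solution in the disk has |β| ≤ 2
  have hb2 : ∀ β : ℂ, ‖β‖ < 1 / |ϑ| →
      β = Complex.exp (-(a * β)) → ‖β‖ ≤ 2 := by
    intro β hβ heq
    have habβ : ‖a * β‖ ≤ 1 / 2 := by
      rw [norm_mul]
      calc ‖a‖ * ‖β‖ ≤ (|ϑ| / 2) * (1 / |ϑ|) := by
            apply mul_le_mul ha hβ.le (norm_nonneg _) (by positivity)
        _ = 1 / 2 := by field_simp <;> ring
    calc ‖β‖ = ‖Complex.exp (-(a * β))‖ := by rw [← heq]
      _ ≤ Real.exp (‖-(a * β)‖) := aux_abs_exp_le _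
      _ ≤ Real.exp (1 / 2) := by
          apply Real.exp_le_exp.2; simpa using habβ
      _ ≤ 2 := aux_exp_half
  -- uniqueness of solutions in the disk
  have huniq : ∀ β₁ β₂ : ℂ, (‖β₁‖ < 1/|ϑ| ∧ β₁ = Complex.exp (-(a * β₁))) →
      (‖β₂‖ < 1/|ϑ| ∧ β₂ = Complex.exp (-(a * β₂))) → β₁ = β₂ := by
    intro β₁ β₂ ⟨h1, e1⟩ ⟨h2, e2⟩
    have b1 := hb2 β₁ h1 e1
    have b2 := hb2 β₂ h2 e2
    have hd : ‖β₁ - β₂‖ ≤ 4 := by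
      calc ‖β₁ - β₂‖ ≤ ‖β₁‖ + ‖β₂‖ := by
            simpa using norm_sub_le β₁ β₂
        _ ≤ 4 := by linarith
    have hsm : ‖a * (β₁ - β₂)‖ ≤ 1 := by
      rw [norm_mul]
      calc ‖a‖ * ‖β₁ - β₂‖ ≤ (1/8) * 4 :=
            mul_le_mul ha8 hd (norm_nonneg _) (by norm_num)
        _ ≤ 1 := by norm_num
    have key := aux_lip a β₁ β₂ hsm
    have hexp2 : Real.exp (‖a * β₂‖) ≤ 2 := by
      refine le_trans (Real.exp_le_exp.2 ?_) aux_exp_half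
      rw [norm_mul]
      calc ‖a‖ * ‖β₂‖ ≤ (1/8) * 2 :=
            mul_le_mul ha8 b2 (norm_nonneg _) (by norm_num)
        _ ≤ 1/2 := by norm_num
    have contr : ‖β₁ - β₂‖ ≤ (1/2) * ‖β₁ - β₂‖ := by
      have e3 : β₁ - β₂ = Complex.exp (-(a * β₁)) - Complex.exp (-(a * β₂)) := by
        rw [← e1, ← e2]
      calc ‖β₁ - β₂‖
          = ‖Complex.exp (-(a * β₁)) - Complex.exp (-(a * β₂))‖ := by rw [← e3]
        _ ≤ 2 * Real.exp (‖a * β₂‖) * ‖a * (β₁ - β₂)‖ := key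
        _ ≤ 2 * 2 * (‖a‖ * ‖β₁ - β₂‖) := by
            rw [← norm_mul]
            nlinarith [norm_nonneg (a * (β₁ - β₂)),
              Real.exp_pos (‖a * β₂‖)]
        _ ≤ (1/2) * ‖β₁ - β₂‖ := by
            nlinarith [norm_nonneg (β₁ - β₂)]
    have h0 : ‖β₁ - β₂‖ ≤ 0 := by linarith
    have habs : ‖β₁ - β₂‖ = 0 := le_antisymm h0 (norm_nonneg _)
    have hsub : β₁ - β₂ = 0 := by
      rwa [norm_eq_zero] at habs
    exact sub_eq_zero.mp hsub
  -- existence via Banach fixed point on the closed ball of radius 2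
  set f : ℂ → ℂ := fun ζ => Complex.exp (-(a * ζ)) with hf_def
  set s : Set ℂ := Metric.closedBall (0:ℂ) 2 with hs_def
  have hmem : ∀ x : ℂ, x ∈ s ↔ ‖x‖ ≤ 2 := by
    intro x
    rw [hs_def, Metric.mem_closedBall, Complex.dist_eq, sub_zero]
  have hsc : IsComplete s := Metric.isClosed_closedBall.isComplete
  have hsf : Set.MapsTo f s s := by
    intro x hx
    rw [hmem] at hx ⊢
    calc ‖Complex.exp (-(a * x))‖ ≤ Real.exp (‖-(a * x)‖) :=
          aux_abs_exp_le _
      _ ≤ Real.exp (1/2) := by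
          apply Real.exp_le_exp.2
          rw [norm_neg, norm_mul]
          calc ‖a‖ * ‖x‖ ≤ (1/8) * 2 :=
                mul_le_mul ha8 hx (norm_nonneg _) (by norm_num)
            _ ≤ 1/2 := by norm_num
      _ ≤ 2 := aux_exp_half
  have hlip : LipschitzOnWith (1/2 : NNReal) f s := by
    apply LipschitzOnWith.of_dist_le_mul
    intro x hx y hy
    rw [hmem] at hx hy
    have hd : ‖x - y‖ ≤ 4 := by
      calc ‖x - y‖ ≤ ‖x‖ + ‖y‖ := by
            simpa using norm_sub_le x y
        _ ≤ 4 := by linarith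
    have hsm : ‖a * (x - y)‖ ≤ 1 := by
      rw [norm_mul]
      calc ‖a‖ * ‖x - y‖ ≤ (1/8) * 4 :=
            mul_le_mul ha8 hd (norm_nonneg _) (by norm_num)
        _ ≤ 1 := by norm_num
    have key := aux_lip a x y hsm
    have hexp2 : Real.exp (‖a * y‖) ≤ 2 := by
      refine le_trans (Real.exp_le_exp.2 ?_) aux_exp_half
      rw [norm_mul]
      calc ‖a‖ * ‖y‖ ≤ (1/8) * 2 :=
            mul_le_mul ha8 hy (norm_nonneg _) (by norm_num)
        _ ≤ 1/2 := by norm_num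
    have hc : ((1/2 : NNReal) : ℝ) = (1/2 : ℝ) := by norm_num
    rw [Complex.dist_eq, Complex.dist_eq, hc]
    calc ‖f x - f y‖
        ≤ 2 * Real.exp (‖a * y‖) * ‖a * (x - y)‖ := key
      _ ≤ 2 * 2 * (‖a‖ * ‖x - y‖) := by
          rw [← norm_mul]
          nlinarith [norm_nonneg (a * (x - y)),
            Real.exp_pos (‖a * y‖)]
      _ ≤ (1/2) * ‖x - y‖ := by
          nlinarith [norm_nonneg (x - y)]
  have hcontr : ContractingWith (1/2 : NNReal) (hsf.restrict f s s) :=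
    ⟨one_half_lt_one, hlip.mapsToRestrict hsf⟩
  have h1s : (1:ℂ) ∈ s := by rw [hmem]; simp
  obtain ⟨β, hβs, hβfix, -, -⟩ :=
    hcontr.exists_fixedPoint' hsc hsf h1s (edist_ne_top _ _)
  rw [hmem] at hβs
  have hβlt : ‖β‖ < 1 / |ϑ| := by
    have h4 : (4:ℝ) ≤ 1 / |ϑ| := by
      rw [le_div_iff₀ hϑpos]; linarith
    linarith
  have hβeq : β = Complex.exp (-(a * β)) := hβfix.symm
  -- the statement's expression matches `a * β`
  have hmatch : ∀ β' : ℂ,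
      -((Real.exp (-z) : ℂ) * (Complex.exp (I * ϑ) - 1) * z * β') = -(a * β') := by
    intro β'; rw [ha_def]
  constructor
  · refine ⟨β, ⟨hβlt, by rw [hmatch]; exact hβeq⟩, ?_⟩
    intro β' ⟨hβ'lt, hβ'eq⟩
    rw [hmatch] at hβ'eq
    exact huniq β' β ⟨hβ'lt, hβ'eq⟩ ⟨hβlt, hβeq⟩
  · intro γ hγlt hγeq
    rw [hmatch] at hγeq
    have hγ2 := hb2 γ hγlt hγeq
    have habγ : ‖a * γ‖ ≤ 1 / 2 := by
      rw [norm_mul]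
      calc ‖a‖ * ‖γ‖ ≤ (|ϑ| / 2) * (1 / |ϑ|) := by
            apply mul_le_mul ha hγlt.le (norm_nonneg _) (by positivity)
        _ = 1 / 2 := by field_simp <;> ring
    have e4 : γ - (1 - a) =
        (Complex.exp (-(a * γ)) - 1 - (-(a * γ))) + a * (1 - γ) := by
      rw [← hγeq]; ring
    have h5 : ‖Complex.exp (-(a * γ)) - 1 - (-(a * γ))‖ ≤
        ‖a * γ‖ ^ 2 := by
      have := Complex.norm_exp_sub_one_sub_id_le (x := -(a * γ)) (by rw [norm_neg]; exact habγ.trans (by norm_num))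
      simpa using this
    have h6 : ‖1 - γ‖ ≤ 2 * ‖a * γ‖ := by
      have e5 : 1 - γ = -(Complex.exp (-(a * γ)) - 1) := by rw [← hγeq]; ring
      rw [e5, norm_neg]
      have := Complex.norm_exp_sub_one_le (x := -(a * γ)) (by rw [norm_neg]; exact habγ.trans (by norm_num))
      simpa using this
    have h7 : ‖γ - (1 - a)‖ ≤
        ‖a * γ‖ ^ 2 + ‖a‖ * (2 * ‖a * γ‖) := by
      rw [e4]
      calc ‖(Complex.exp (-(a * γ)) - 1 - (-(a * γ))) + a * (1 - γ)‖
          ≤ ‖Complex.exp (-(a * γ)) - 1 - (-(a * γ))‖ +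
              ‖a * (1 - γ)‖ := norm_add_le _ _
        _ ≤ ‖a * γ‖ ^ 2 + ‖a‖ * (2 * ‖a * γ‖) := by
            rw [norm_mul]
            have := mul_le_mul_of_nonneg_left h6 hann
            linarith
    have h8 : ‖a * γ‖ ≤ ‖a‖ * 2 := by
      rw [norm_mul]
      exact mul_le_mul_of_nonneg_left hγ2 hann
    have hϑsq : |ϑ| ^ 2 = ϑ ^ 2 := sq_abs ϑ
    calc ‖γ - (1 - a)‖
        ≤ ‖a * γ‖ ^ 2 + ‖a‖ * (2 * ‖a * γ‖) := h7
      _ ≤ 2 * ϑ ^ 2 := by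
          rw [norm_mul] at h8 ⊢
          nlinarith [norm_nonneg γ, mul_nonneg hann (norm_nonneg γ)]
end

section
/- For real α > 0 and real τ, Re{(α + iτ) log(1 + iτ/α)} ≤ ∫_0^{|τ|/α} (αt - |τ|)/(1 + t²) dt, and in particular Re{(α + iτ) log(1 + iτ/α)} ≤ 0. -/
open Complex Real

lemma arg_one_add_I_mul (y : ℝ) : Complex.arg (1 + I * y) = Real.arctan y := by
  have hre : (1 + I * (y : ℂ)).re = 1 := by simp
  have him : (1 + I * (y : ℂ)).im = y := by simp
  have h1 : Complex.arg (1 + I * y) < π / 2 :=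
    Complex.arg_lt_pi_div_two_iff.2 (Or.inl (by rw [hre]; norm_num))
  have h2 : -(π / 2) < Complex.arg (1 + I * y) :=
    Complex.neg_pi_div_two_lt_arg_iff.2 (Or.inl (by rw [hre]; norm_num))
  have ht := Complex.tan_arg (1 + I * y)
  rw [hre, him, div_one] at ht
  conv_rhs => rw [← ht]
  rw [Real.arctan_tan h2 h1]

lemma integral_self_div_one_add_sq (T : ℝ) :
    ∫ t in (0:ℝ)..T, t / (1 + t ^ 2) = Real.log (1 + T ^ 2) / 2 := by
  have h : ∀ t ∈ Set.uIcc (0:ℝ) T,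
      HasDerivAt (fun u => Real.log (1 + u ^ 2) / 2) (t / (1 + t ^ 2)) t := by
    intro t _
    have hpos : (0:ℝ) < 1 + t ^ 2 := by positivity
    have h1 : HasDerivAt (fun u : ℝ => 1 + u ^ 2) (2 * t) t := by
      simpa using ((hasDerivAt_pow 2 t).const_add 1)
    have h2 := (Real.hasDerivAt_log hpos.ne').comp t h1
    have := h2.div_const 2
    refine this.congr_deriv ?_
    ring
  have hcont : IntervalIntegrable (fun t : ℝ => t / (1 + t ^ 2)) MeasureTheory.volume 0 T := by
    apply Continuous.intervalIntegrable
    exact continuous_id.div (by continuity) (fun t => by positivity)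
  have := intervalIntegral.integral_eq_sub_of_hasDerivAt h hcont
  simpa using this

/-- for `α > 0` and real `τ`,
`Re{(α + iτ) log(1 + iτ/α)} ≤ ∫₀^{|τ|/α} (αt - |τ|)/(1+t²) dt ≤ 0`. -/
theorem stmt_5 (α τ : ℝ) (hα : 0 < α) :
    (((α : ℂ) + I * τ) * Complex.log (1 + I * τ / α)).re
        ≤ ∫ t in (0 : ℝ)..(|τ| / α), (α * t - |τ|) / (1 + t ^ 2) ∧
      (((α : ℂ) + I * τ) * Complex.log (1 + I * τ / α)).re ≤ 0 := by
  set T : ℝ := |τ| / α with hT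
  have hT0 : 0 ≤ T := div_nonneg (abs_nonneg τ) hα.le
  -- rewrite the argument of log
  have hz : (1 : ℂ) + I * τ / α = 1 + I * ((τ / α : ℝ) : ℂ) := by
    push_cast; ring
  -- real and imaginary parts of the log
  have habs : ‖(1 + I * ((τ / α : ℝ) : ℂ))‖ = Real.sqrt (1 + (τ / α) ^ 2) := by
    rw [Complex.norm_def, Complex.normSq_apply]
    simp
    ring_nf
  have hre : (Complex.log (1 + I * τ / α)).re = Real.log (1 + (τ / α) ^ 2) / 2 := by
    rw [hz, Complex.log_re, habs, Real.log_sqrt (by positivity)]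
  have him : (Complex.log (1 + I * τ / α)).im = Real.arctan (τ / α) := by
    rw [hz, Complex.log_im, arg_one_add_I_mul]
  -- LHS closed form
  have hlhs : (((α : ℂ) + I * τ) * Complex.log (1 + I * τ / α)).re
      = α * (Real.log (1 + (τ / α) ^ 2) / 2) - τ * Real.arctan (τ / α) := by
    rw [Complex.mul_re, hre, him]
    simp
  -- integrability
  have hint1 : IntervalIntegrable (fun t : ℝ => α * t / (1 + t ^ 2)) MeasureTheory.volume 0 T := by
    apply Continuous.intervalIntegrable
    exact (continuous_const.mul continuous_id).div (by continuity) (fun t => by positivity)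
  have hint2 : IntervalIntegrable (fun t : ℝ => |τ| / (1 + t ^ 2)) MeasureTheory.volume 0 T := by
    apply Continuous.intervalIntegrable
    exact continuous_const.div (by continuity) (fun t => by positivity)
  -- value of the integral
  have hval : ∫ t in (0:ℝ)..T, (α * t - |τ|) / (1 + t ^ 2)
      = α * (Real.log (1 + T ^ 2) / 2) - |τ| * Real.arctan T := by
    have hsplit : ∀ t : ℝ, (α * t - |τ|) / (1 + t ^ 2)
        = α * t / (1 + t ^ 2) - |τ| / (1 + t ^ 2) := fun t => by ring
    rw [intervalIntegral.integral_congr (g := fun t => α * t / (1 + t ^ 2) - |τ| / (1 + t ^ 2))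
      (fun t _ => hsplit t)]
    rw [intervalIntegral.integral_sub hint1 hint2]
    have h1 : ∫ t in (0:ℝ)..T, α * t / (1 + t ^ 2) = α * (Real.log (1 + T ^ 2) / 2) := by
      have : ∀ t : ℝ, α * t / (1 + t ^ 2) = α * (t / (1 + t ^ 2)) := fun t => by ring
      rw [intervalIntegral.integral_congr (g := fun t => α * (t / (1 + t ^ 2))) (fun t _ => this t),
        intervalIntegral.integral_const_mul, integral_self_div_one_add_sq]
    have h2 : ∫ t in (0:ℝ)..T, |τ| / (1 + t ^ 2) = |τ| * Real.arctan T := by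
      have : ∀ t : ℝ, |τ| / (1 + t ^ 2) = |τ| * (1 / (1 + t ^ 2)) := fun t => by ring
      rw [intervalIntegral.integral_congr (g := fun t => |τ| * (1 / (1 + t ^ 2))) (fun t _ => this t),
        intervalIntegral.integral_const_mul, integral_one_div_one_add_sq]
      simp
    rw [h1, h2]
  -- equality of LHS with the integral
  have heq : (((α : ℂ) + I * τ) * Complex.log (1 + I * τ / α)).re
      = ∫ t in (0:ℝ)..T, (α * t - |τ|) / (1 + t ^ 2) := by
    rw [hlhs, hval]
    have hsq : (τ / α) ^ 2 = T ^ 2 := by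
      rw [hT, div_pow, div_pow, _root_.sq_abs]
    have harct : τ * Real.arctan (τ / α) = |τ| * Real.arctan T := by
      rcases abs_cases τ with ⟨h, _⟩ | ⟨h, _⟩
      · rw [h, hT, h]
      · rw [h, hT, h, neg_div, Real.arctan_neg]; ring
    rw [hsq, harct]
  -- nonpositivity of the integral
  have hnp : (∫ t in (0:ℝ)..T, (α * t - |τ|) / (1 + t ^ 2)) ≤ 0 := by
    have : (∫ t in (0:ℝ)..T, (α * t - |τ|) / (1 + t ^ 2))
        ≤ ∫ _t in (0:ℝ)..T, (0:ℝ) := by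
      apply intervalIntegral.integral_mono_on hT0 _ intervalIntegrable_const
      · intro t ht
        have h1 : α * t ≤ |τ| := by
          rcases ht with ⟨ht0, ht1⟩
          calc α * t ≤ α * T := by nlinarith
            _ = |τ| := by rw [hT]; field_simp
        have : (0:ℝ) < 1 + t ^ 2 := by positivity
        exact div_nonpos_iff.2 (Or.inr ⟨by linarith, this.le⟩)
      · have hsplit : ∀ t : ℝ, (α * t - |τ|) / (1 + t ^ 2)
            = α * t / (1 + t ^ 2) - |τ| / (1 + t ^ 2) := fun t => by ring
        rw [show (fun t : ℝ => (α * t - |τ|) / (1 + t ^ 2))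
            = fun t => α * t / (1 + t ^ 2) - |τ| / (1 + t ^ 2) from funext hsplit]
        exact hint1.sub hint2
    simpa using this
  exact ⟨le_of_eq heq, heq ▸ hnp⟩
end

section
/- For z > 0, λ = e^{-z}, w > 0 with w/z a positive integer, and real y, define F(ϑ, w) = e^{-iλϑw} ∑_{k ≤ w/z} λ^k (e^{iϑ} - 1)^k (w - kz)^k / k!. Then for |ϑ| ≤ w^{-2}, F(ϑ, w) - e^{-(γ/2)ϑ²w} ≪ |ϑ|, where γ = λ(1 - 2zλ) and the implied constant depends only on z. -/
open Complex Real Finset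

lemma aux_L0 (t : ℝ) : ‖Complex.exp (I * t) - 1‖ ≤ |t| := by
  have h1 : Complex.exp (I * t) - 1 = ((Real.cos t - 1 : ℝ) : ℂ) + ((Real.sin t : ℝ) : ℂ) * I := by
    rw [mul_comm, Complex.exp_mul_I]
    push_cast
    ring
  rw [h1, Complex.norm_add_mul_I]
  have h2 : (Real.cos t - 1) ^ 2 + Real.sin t ^ 2 ≤ t ^ 2 := by
    have hc := Real.one_sub_sq_div_two_le_cos (x := t)
    have hc1 := Real.cos_le_one t
    nlinarith [Real.sin_sq_add_cos_sq t]
  calc Real.sqrt ((Real.cos t - 1) ^ 2 + Real.sin t ^ 2) ≤ Real.sqrt (t ^ 2) :=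
        Real.sqrt_le_sqrt h2
    _ = |t| := Real.sqrt_sq_eq_abs t

lemma aux_L1 (t : ℝ) : ‖Complex.exp (I * t) - 1 - I * t‖ ≤ 2 * t ^ 2 := by
  rcases le_or_gt |t| 1 with h | h
  · have h' : ‖I * t‖ ≤ 1 := by simpa using h
    have h2 := Complex.norm_exp_sub_one_sub_id_le h'
    have h3 : ‖I * (t : ℂ)‖ ^ 2 = t ^ 2 := by
      rw [norm_mul, Complex.norm_I, Complex.norm_real, Real.norm_eq_abs, one_mul, _root_.sq_abs]
    calc ‖Complex.exp (I * t) - 1 - I * t‖ ≤ ‖I * (t : ℂ)‖ ^ 2 := h2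
      _ = t ^ 2 := h3
      _ ≤ 2 * t ^ 2 := by nlinarith [sq_nonneg t]
  · have h2 : ‖Complex.exp (I * t) - 1 - I * t‖
        ≤ ‖Complex.exp (I * t) - 1‖ + ‖I * (t : ℂ)‖ :=
      norm_sub_le _ _
    have h3 : ‖I * (t : ℂ)‖ = |t| := by simp
    have h4 := aux_L0 t
    have : 2 * |t| ≤ 2 * t ^ 2 := by nlinarith [_root_.sq_abs t, abs_nonneg t]
    calc ‖Complex.exp (I * t) - 1 - I * t‖
        ≤ ‖Complex.exp (I * t) - 1‖ + ‖I * (t : ℂ)‖ := h2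
      _ ≤ |t| + |t| := by rw [h3]; linarith
      _ ≤ 2 * t ^ 2 := by linarith

lemma aux_L2 (y : ℝ) : |Real.exp y - 1| ≤ |y| * Real.exp |y| := by
  rcases le_or_gt 0 y with h | h
  · rw [_root_.abs_of_nonneg h, _root_.abs_of_nonneg (by linarith [Real.one_le_exp h] : (0:ℝ) ≤ Real.exp y - 1)]
    have h1 := Real.add_one_le_exp (-y)
    have h3 : Real.exp (-y) * Real.exp y = 1 := by rw [← Real.exp_add]; simp
    nlinarith [Real.exp_pos y]
  · rw [_root_.abs_of_neg h, _root_.abs_of_nonpos (by nlinarith [Real.exp_lt_one_iff.mpr h] : Real.exp y - 1 ≤ 0)]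
    have h1 := Real.add_one_le_exp y
    have h2 : 1 ≤ Real.exp (-y) := Real.one_le_exp (by linarith)
    nlinarith

set_option maxHeartbeats 2000000 in
/-- estimate (7), `F(ϑ,w) - e^{-(γ/2)ϑ²w} ≪ |ϑ|` for `|ϑ| ≤ w⁻²`. -/
theorem stmt_12 (z : ℝ) (hz : 0 < z) :
    ∃ C > 0, ∀ (K : ℕ), 1 ≤ K → ∀ w ϑ : ℝ, w = K * z → |ϑ| ≤ w ^ (-2 : ℝ) →
      ‖(Complex.exp (-(I * (Real.exp (-z) : ℂ) * ϑ * w)) *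
              (∑ k ∈ Finset.range (K + 1),
                (Real.exp (-z) : ℂ) ^ k * (Complex.exp (I * ϑ) - 1) ^ k
                  * ((w : ℂ) - k * z) ^ k / (Nat.factorial k))
            - (Real.exp (-(Real.exp (-z) * (1 - 2 * z * Real.exp (-z)) / 2) * ϑ ^ 2 * w) : ℂ))‖
        ≤ C * |ϑ| := by
  have hl0 : (0:ℝ) < Real.exp (-z) := Real.exp_pos _
  set l : ℝ := Real.exp (-z) with hldef
  set g : ℝ := l * (1 - 2 * z * l) with hgdef
  set M : ℝ := Real.exp (l / z) with hMdef
  clear_value l g M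
  have hM1 : (1:ℝ) ≤ M := by rw [hMdef]; exact Real.one_le_exp (div_nonneg hl0.le hz.le)
  have hCpos : (0:ℝ) < 2*l^2*M + (1 + l/z) * (2*l/z + l^2*M) + l*z + l^2
      + (|g|/(2*z)) * Real.exp (|g|/(2*z^3)) := by
    have hM0 : (0:ℝ) < M := lt_of_lt_of_le one_pos hM1
    have hlz : (0:ℝ) ≤ l / z := div_nonneg hl0.le hz.le
    have h1 : (0:ℝ) < l * z := mul_pos hl0 hz
    have h2 : (0:ℝ) ≤ 2 * l ^ 2 * M :=
      mul_nonneg (mul_nonneg (by norm_num) (sq_nonneg l)) hM0.le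
    have h3 : (0:ℝ) ≤ (1 + l/z) * (2*l/z + l^2*M) := by
      apply mul_nonneg (by linarith)
      have := mul_nonneg (sq_nonneg l) hM0.le
      have h4 : (0:ℝ) ≤ 2 * l / z := by
        rw [mul_div_assoc]
        linarith
      linarith
    have h5 : (0:ℝ) ≤ l ^ 2 := sq_nonneg l
    have h6 : (0:ℝ) ≤ (|g|/(2*z)) * Real.exp (|g|/(2*z^3)) :=
      mul_nonneg (div_nonneg (abs_nonneg g) (by linarith)) (Real.exp_pos _).le
    linarith
  refine ⟨2*l^2*M + (1 + l/z) * (2*l/z + l^2*M) + l*z + l^2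
      + (|g|/(2*z)) * Real.exp (|g|/(2*z^3)), hCpos, ?_⟩
  intro K hK w ϑ hw hϑ
  obtain ⟨K', rfl⟩ : ∃ K', K = K' + 1 := ⟨K - 1, (Nat.succ_pred_eq_of_pos hK).symm⟩
  have hK1 : (1:ℝ) ≤ ((K' + 1 : ℕ):ℝ) := by exact_mod_cast hK
  have hw0 : 0 < w := by rw [hw]; nlinarith
  have hzw : z ≤ w := by rw [hw]; nlinarith
  have hrw : w ^ (-2:ℝ) = (w ^ 2)⁻¹ := by
    rw [show (-2:ℝ) = -((2:ℕ):ℝ) by norm_num, Real.rpow_neg hw0.le, Real.rpow_natCast]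
  rw [hrw] at hϑ
  clear hrw
  have hϑ2 : |ϑ| * w ^ 2 ≤ 1 := by
    have h2 : (0:ℝ) < w ^ 2 := by positivity
    calc |ϑ| * w ^ 2 ≤ (w ^ 2)⁻¹ * w ^ 2 := by nlinarith
      _ = 1 := by field_simp
  have habs : (0:ℝ) ≤ |ϑ| := abs_nonneg ϑ
  have hϑw : |ϑ| * w ≤ w⁻¹ := by
    rw [← one_div, le_div_iff₀ hw0]; nlinarith
  have hwzinv : w⁻¹ ≤ z⁻¹ := by
    rw [inv_le_inv₀ hw0 hz]; exact hzw
  have hϑwz : |ϑ| * w ≤ z⁻¹ := hϑw.trans hwzinv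
  set q : ℂ := Complex.exp (I * ϑ) - 1 with hqdef
  set A : ℂ := Complex.exp (-(I * (l:ℂ) * ϑ * w)) with hAdef
  set S : ℂ := ∑ k ∈ Finset.range (K' + 1 + 1),
      (l:ℂ) ^ k * q ^ k * ((w : ℂ) - k * z) ^ k / (Nat.factorial k) with hSdef
  set Gr : ℝ := Real.exp (-(g / 2) * ϑ ^ 2 * w) with hGdef
  show ‖A * S - (Gr:ℂ)‖ ≤ _
  set a : ℝ := l * ϑ * w with hadef
  set b : ℝ := l * ϑ * (w - z) with hbdef
  clear_value q A S Gr a b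
  have key : A * S - (Gr:ℂ) =
      (A - (1 - I * (a:ℂ))) * S
      + (1 - I * (a:ℂ)) * (S - 1 - I * (b:ℂ))
      + (I * ((b:ℂ) - (a:ℂ)) + (a:ℂ) * (b:ℂ))
      + (1 - (Gr:ℂ)) := by
    ring_nf
    rw [Complex.I_sq]
    push_cast
    ring
  -- termwise bound for the sum
  have hq_le : ‖q‖ ≤ |ϑ| := by rw [hqdef]; exact aux_L0 ϑ
  have hterm : ∀ k, k ∈ Finset.range (K' + 1 + 1) →
      ‖(l:ℂ) ^ k * q ^ k * ((w : ℂ) - k * z) ^ k / (Nat.factorial k)‖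
        ≤ (l * (|ϑ| * w)) ^ k / (Nat.factorial k) := by
    intro k hk
    rw [Finset.mem_range] at hk
    have hkK : (k:ℝ) * z ≤ w := by
      rw [hw]
      have hk2 : (k:ℝ) ≤ (K' + 1 : ℕ) := by exact_mod_cast Nat.lt_succ_iff.mp hk
      nlinarith
    have habsw : ‖(w:ℂ) - k * z‖ = w - k * z := by
      rw [show ((w:ℂ) - k * z) = (((w - k * z : ℝ)):ℂ) by push_cast; ring, Complex.norm_real, Real.norm_eq_abs,
        _root_.abs_of_nonneg (by linarith)]
    rw [norm_div, norm_mul, norm_mul, norm_pow, norm_pow, norm_pow, Complex.norm_real, Real.norm_eq_abs, habsw,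
      Complex.norm_natCast]
    have hfac : (0:ℝ) < (Nat.factorial k : ℝ) := by positivity
    rw [div_le_div_iff₀ hfac hfac]
    have hbase : |l| ^ k * ‖q‖ ^ k * (w - k * z) ^ k ≤ (l * (|ϑ| * w)) ^ k := by
      rw [← mul_pow, ← mul_pow]
      apply pow_le_pow_left₀
      · exact mul_nonneg (mul_nonneg (abs_nonneg l) (norm_nonneg q)) (by linarith)
      · rw [_root_.abs_of_nonneg hl0.le]
        have h0q : (0:ℝ) ≤ ‖q‖ := norm_nonneg q
        have hkz0 : (0:ℝ) ≤ (k:ℝ) * z := by positivity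
        have h1 : ‖q‖ * (w - k * z) ≤ |ϑ| * w :=
          mul_le_mul hq_le (by linarith) (by linarith) habs
        rw [mul_assoc]
        exact mul_le_mul_of_nonneg_left h1 hl0.le
    exact mul_le_mul_of_nonneg_right hbase hfac.le
  have hx : l * (|ϑ| * w) ≤ l / z := by
    rw [div_eq_mul_inv]
    nlinarith
  have hx0 : (0:ℝ) ≤ l * (|ϑ| * w) := mul_nonneg hl0.le (mul_nonneg habs hw0.le)
  have hS_le : ‖S‖ ≤ M := by
    rw [hSdef, hMdef]
    refine le_trans (norm_sum_le _ _) ?_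
    calc (∑ k ∈ Finset.range (K' + 1 + 1),
          ‖(l:ℂ) ^ k * q ^ k * ((w : ℂ) - k * z) ^ k / (Nat.factorial k)‖)
      ≤ ∑ k ∈ Finset.range (K' + 1 + 1), (l * (|ϑ| * w)) ^ k / (Nat.factorial k) :=
        Finset.sum_le_sum hterm
      _ ≤ ∑ k ∈ Finset.range (K' + 1 + 1), (l / z) ^ k / (Nat.factorial k) := by
        refine Finset.sum_le_sum fun k _ => ?_
        have hf : (0:ℝ) < (Nat.factorial k : ℝ) := by positivity
        exact div_le_div_of_nonneg_right (pow_le_pow_left₀ hx0 hx k) hf.le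
      _ ≤ Real.exp (l / z) := Real.sum_le_exp_of_nonneg (div_nonneg hl0.le hz.le) _
  -- bound X1 factor
  have hX1a : ‖A - (1 - I * (a:ℂ))‖ ≤ 2 * l ^ 2 * |ϑ| := by
    have e1 : A - (1 - I * (a:ℂ)) = Complex.exp (I * ((-a : ℝ):ℂ)) - 1 - I * ((-a:ℝ):ℂ) := by
      rw [hAdef, show -(I * (l:ℂ) * ϑ * w) = I * ((-a : ℝ):ℂ) by rw [hadef]; push_cast; ring]
      push_cast
      ring
    rw [e1]
    calc ‖_‖ ≤ 2 * (-a) ^ 2 := aux_L1 (-a)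
      _ = 2 * (l ^ 2 * (ϑ ^ 2 * w ^ 2)) := by rw [hadef]; ring
      _ ≤ 2 * l ^ 2 * |ϑ| := by
        have h7 : ϑ ^ 2 * w ^ 2 ≤ |ϑ| := by
          nlinarith [mul_le_mul_of_nonneg_right hϑ2 habs, _root_.sq_abs ϑ]
        nlinarith [mul_le_mul_of_nonneg_left h7 (sq_nonneg l)]
  -- decompose S
  have hS1 : S - 1 - I * (b:ℂ) =
      (∑ j ∈ Finset.range K',
        (l:ℂ) ^ (j + 1 + 1) * q ^ (j + 1 + 1) * ((w : ℂ) - (j + 1 + 1 : ℕ) * z) ^ (j + 1 + 1)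
          / (Nat.factorial (j + 1 + 1)))
      + (l:ℂ) * ((w:ℂ) - z) * (q - I * ϑ) := by
    rw [hSdef, Finset.sum_range_succ', Finset.sum_range_succ', hbdef]
    simp [Nat.factorial]
    push_cast
    ring
  have htail : ‖∑ j ∈ Finset.range K',
      (l:ℂ) ^ (j + 1 + 1) * q ^ (j + 1 + 1) * ((w : ℂ) - (j + 1 + 1 : ℕ) * z) ^ (j + 1 + 1)
        / (Nat.factorial (j + 1 + 1))‖ ≤ l ^ 2 * M * |ϑ| := by
    have hstep : ∀ j, j ∈ Finset.range K' →
        ‖(l:ℂ) ^ (j + 1 + 1) * q ^ (j + 1 + 1)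
            * ((w : ℂ) - (j + 1 + 1 : ℕ) * z) ^ (j + 1 + 1) / (Nat.factorial (j + 1 + 1))‖
          ≤ l ^ 2 * |ϑ| * ((l / z) ^ j / (Nat.factorial j)) := by
      intro j hj
      rw [Finset.mem_range] at hj
      have h1 := hterm (j + 1 + 1) (by rw [Finset.mem_range]; omega)
      refine h1.trans ?_
      have hpow : (|ϑ| * w) ^ (j + 1 + 1) ≤ |ϑ| * (z⁻¹) ^ j := by
        calc (|ϑ| * w) ^ (j + 1 + 1) = (|ϑ| * w) ^ (j + 1) * (|ϑ| * w) := by ring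
          _ ≤ (w⁻¹) ^ (j + 1) * (|ϑ| * w) := by
            exact mul_le_mul_of_nonneg_right
              (pow_le_pow_left₀ (mul_nonneg habs hw0.le) hϑw (j + 1))
              (mul_nonneg habs hw0.le)
          _ = |ϑ| * (w⁻¹) ^ j := by
            rw [pow_succ]
            field_simp
          _ ≤ |ϑ| * (z⁻¹) ^ j := by
            apply mul_le_mul_of_nonneg_left (pow_le_pow_left₀ (inv_nonneg.mpr hw0.le) hwzinv j) habs
      have hfacle : (Nat.factorial j : ℝ) ≤ (Nat.factorial (j + 1 + 1) : ℝ) := by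
        exact_mod_cast Nat.factorial_le (by omega)
      have hfj : (0:ℝ) < (Nat.factorial j : ℝ) := by positivity
      have hfj2 : (0:ℝ) < (Nat.factorial (j + 1 + 1) : ℝ) := by positivity
      calc (l * (|ϑ| * w)) ^ (j + 1 + 1) / (Nat.factorial (j + 1 + 1))
          ≤ (l * (|ϑ| * w)) ^ (j + 1 + 1) / (Nat.factorial j) := by gcongr <;> positivity
        _ ≤ (l ^ 2 * |ϑ| * (l / z) ^ j) / (Nat.factorial j) := by
            have hnum : (l * (|ϑ| * w)) ^ (j + 1 + 1) ≤ l ^ 2 * |ϑ| * (l / z) ^ j := by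
              calc (l * (|ϑ| * w)) ^ (j + 1 + 1) = l ^ (j + 1 + 1) * (|ϑ| * w) ^ (j + 1 + 1) :=
                    mul_pow _ _ _
                _ ≤ l ^ (j + 1 + 1) * (|ϑ| * (z⁻¹) ^ j) :=
                    mul_le_mul_of_nonneg_left hpow (pow_nonneg hl0.le _)
                _ = l ^ 2 * |ϑ| * (l / z) ^ j := by
                    rw [div_eq_mul_inv, mul_pow]
                    ring
            exact div_le_div_of_nonneg_right hnum hfj.le
        _ = l ^ 2 * |ϑ| * ((l / z) ^ j / (Nat.factorial j)) := by ring
    calc ‖_‖ ≤ ∑ j ∈ Finset.range K',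
          ‖(l:ℂ) ^ (j + 1 + 1) * q ^ (j + 1 + 1)
            * ((w : ℂ) - (j + 1 + 1 : ℕ) * z) ^ (j + 1 + 1) / (Nat.factorial (j + 1 + 1))‖ :=
        norm_sum_le _ _
      _ ≤ ∑ j ∈ Finset.range K', l ^ 2 * |ϑ| * ((l / z) ^ j / (Nat.factorial j)) :=
        Finset.sum_le_sum hstep
      _ = l ^ 2 * |ϑ| * ∑ j ∈ Finset.range K', (l / z) ^ j / (Nat.factorial j) := by
        rw [Finset.mul_sum]
      _ ≤ l ^ 2 * M * |ϑ| := by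
        have hsum := Real.sum_le_exp_of_nonneg (div_nonneg hl0.le hz.le) K'
        rw [← hMdef] at hsum
        have h0 : (0:ℝ) ≤ l ^ 2 * |ϑ| := mul_nonneg (sq_nonneg l) habs
        exact le_trans (mul_le_mul_of_nonneg_left hsum h0) (le_of_eq (by ring))
  have hq2 : ϑ ^ 2 * w ≤ |ϑ| * z⁻¹ := by
    nlinarith [mul_le_mul_of_nonneg_left hϑwz habs, _root_.sq_abs ϑ]
  have hk1 : ‖(l:ℂ) * ((w:ℂ) - z) * (q - I * ϑ)‖ ≤ 2 * l / z * |ϑ| := by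
    rw [show ((w:ℂ) - z) = ((w - z : ℝ):ℂ) by push_cast; ring, norm_mul, norm_mul,
      Complex.norm_real, Real.norm_eq_abs, Complex.norm_real, Real.norm_eq_abs]
    have h1 : ‖q - I * ϑ‖ ≤ 2 * ϑ ^ 2 := by rw [hqdef]; exact aux_L1 ϑ
    rw [_root_.abs_of_nonneg hl0.le, _root_.abs_of_nonneg (by linarith : (0:ℝ) ≤ w - z)]
    have h0c : (0:ℝ) ≤ ‖q - I * ϑ‖ := norm_nonneg _
    have h3 : (w - z) * ‖q - I * ϑ‖ ≤ w * (2 * ϑ ^ 2) :=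
      mul_le_mul (by linarith) h1 h0c hw0.le
    have h4 : l * ((w - z) * ‖q - I * ϑ‖) ≤ l * (w * (2 * ϑ ^ 2)) :=
      mul_le_mul_of_nonneg_left h3 hl0.le
    have h5' : w * (2 * ϑ ^ 2) ≤ 2 * (|ϑ| * z⁻¹) := by nlinarith [hq2]
    have h5 : l * (w * (2 * ϑ ^ 2)) ≤ l * (2 * (|ϑ| * z⁻¹)) :=
      mul_le_mul_of_nonneg_left h5' hl0.le
    calc l * (w - z) * ‖q - I * ϑ‖
        = l * ((w - z) * ‖q - I * ϑ‖) := by ring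
      _ ≤ l * (w * (2 * ϑ ^ 2)) := h4
      _ ≤ l * (2 * (|ϑ| * z⁻¹)) := h5
      _ = 2 * l / z * |ϑ| := by rw [div_eq_mul_inv]; ring
  have hmid : ‖S - 1 - I * (b:ℂ)‖ ≤ (2 * l / z + l ^ 2 * M) * |ϑ| := by
    rw [hS1]
    refine le_trans (norm_add_le _ _) ?_
    have := add_le_add htail hk1
    linarith
  have hX2 : ‖1 - I * (a:ℂ)‖ ≤ 1 + l / z := by
    refine le_trans (norm_sub_le _ _) ?_
    have h1 : ‖I * (a:ℂ)‖ = |a| := by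
      rw [norm_mul, Complex.norm_I, one_mul, Complex.norm_real, Real.norm_eq_abs]
    rw [h1, norm_one]
    have h2 : |a| ≤ l / z := by
      rw [hadef, abs_mul, abs_mul, _root_.abs_of_nonneg hl0.le, _root_.abs_of_nonneg hw0.le,
        div_eq_mul_inv]
      calc l * |ϑ| * w = l * (|ϑ| * w) := by ring
        _ ≤ l * z⁻¹ := mul_le_mul_of_nonneg_left hϑwz hl0.le
    linarith
  have hX3 : ‖I * ((b:ℂ) - (a:ℂ)) + (a:ℂ) * (b:ℂ)‖ ≤ l * z * |ϑ| + l ^ 2 * |ϑ| := by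
    refine le_trans (norm_add_le _ _) ?_
    have h1 : ‖I * ((b:ℂ) - (a:ℂ))‖ = |b - a| := by
      rw [show ((b:ℂ) - (a:ℂ)) = ((b - a : ℝ):ℂ) by push_cast; ring, norm_mul, Complex.norm_I,
        one_mul, Complex.norm_real, Real.norm_eq_abs]
    have h2 : ‖(a:ℂ) * (b:ℂ)‖ = |a| * |b| := by
      rw [norm_mul, Complex.norm_real, Real.norm_eq_abs, Complex.norm_real, Real.norm_eq_abs]
    rw [h1, h2]
    have h3 : |b - a| = l * z * |ϑ| := by
      rw [hadef, hbdef, show l * ϑ * (w - z) - l * ϑ * w = -(l * z * ϑ) by ring, abs_neg,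
        abs_mul, abs_mul, _root_.abs_of_nonneg hl0.le, _root_.abs_of_nonneg hz.le]
    have h4 : |a| * |b| ≤ l ^ 2 * |ϑ| := by
      rw [hadef, hbdef, abs_mul, abs_mul, abs_mul, abs_mul, _root_.abs_of_nonneg hl0.le,
        _root_.abs_of_nonneg hw0.le, _root_.abs_of_nonneg (by linarith : (0:ℝ) ≤ w - z)]
      have h5 : ϑ ^ 2 * w ^ 2 ≤ |ϑ| := by
        nlinarith [mul_le_mul_of_nonneg_right hϑ2 habs, _root_.sq_abs ϑ]
      have h6a : l * |ϑ| * (w - z) ≤ l * |ϑ| * w := by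
        have := mul_nonneg hl0.le habs
        nlinarith
      have h6 := mul_le_mul_of_nonneg_left h6a (mul_nonneg (mul_nonneg hl0.le habs) hw0.le)
      have h6' : l * |ϑ| * w * (l * |ϑ| * (w - z)) ≤ l ^ 2 * (ϑ ^ 2 * w ^ 2) := by
        calc l * |ϑ| * w * (l * |ϑ| * (w - z)) ≤ l * |ϑ| * w * (l * |ϑ| * w) := h6
          _ = l ^ 2 * (|ϑ| ^ 2 * w ^ 2) := by ring
          _ = l ^ 2 * (ϑ ^ 2 * w ^ 2) := by rw [_root_.sq_abs]
      have h7 := mul_le_mul_of_nonneg_left h5 (sq_nonneg l)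
      linarith
    linarith
  have hX4 : ‖1 - (Gr:ℂ)‖ ≤ |g| / (2 * z) * Real.exp (|g| / (2 * z ^ 3)) * |ϑ| := by
    rw [show (1 - (Gr:ℂ)) = (((1 - Gr : ℝ)):ℂ) by push_cast; ring, Complex.norm_real, Real.norm_eq_abs,
      abs_sub_comm, hGdef]
    set x : ℝ := -(g / 2) * ϑ ^ 2 * w with hxdef
    have h1 := aux_L2 x
    have hxabs : |x| = |g| / 2 * (ϑ ^ 2 * w) := by
      rw [hxdef, abs_mul, abs_mul, abs_neg, abs_div, _root_.abs_two,
        _root_.abs_of_nonneg (sq_nonneg ϑ), _root_.abs_of_nonneg hw0.le]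
      ring
    have hq3 : ϑ ^ 2 * w ≤ (z ^ 3)⁻¹ := by
      have h5 : ϑ ^ 2 * w ^ 4 ≤ 1 := by
        have h := mul_le_mul hϑ2 hϑ2 (mul_nonneg habs (sq_nonneg w)) zero_le_one
        calc ϑ ^ 2 * w ^ 4 = (|ϑ| * w ^ 2) * (|ϑ| * w ^ 2) := by
              rw [← _root_.sq_abs ϑ]; ring
          _ ≤ 1 := by linarith
      rw [← one_div, le_div_iff₀ (by positivity : (0:ℝ) < z ^ 3)]
      have h8 : z ^ 3 ≤ w ^ 3 := pow_le_pow_left₀ hz.le hzw 3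
      nlinarith [mul_nonneg (sq_nonneg ϑ) hw0.le]
    have hb1 : |x| ≤ |g| / (2 * z) * |ϑ| := by
      rw [hxabs]
      calc |g| / 2 * (ϑ ^ 2 * w) ≤ |g| / 2 * (|ϑ| * z⁻¹) :=
          mul_le_mul_of_nonneg_left hq2 (div_nonneg (abs_nonneg g) (by norm_num))
        _ = |g| / (2 * z) * |ϑ| := by
            field_simp
            try ring
    have hb2 : |x| ≤ |g| / (2 * z ^ 3) := by
      rw [hxabs]
      calc |g| / 2 * (ϑ ^ 2 * w) ≤ |g| / 2 * (z ^ 3)⁻¹ :=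
          mul_le_mul_of_nonneg_left hq3 (div_nonneg (abs_nonneg g) (by norm_num))
        _ = |g| / (2 * z ^ 3) := by field_simp
    have hx0' : (0:ℝ) ≤ |x| := abs_nonneg x
    calc |Real.exp x - 1| ≤ |x| * Real.exp |x| := h1
      _ ≤ (|g| / (2 * z) * |ϑ|) * Real.exp (|g| / (2 * z ^ 3)) := by
        apply mul_le_mul hb1 (Real.exp_le_exp.mpr hb2) (Real.exp_pos _).le
        positivity
      _ = |g| / (2 * z) * Real.exp (|g| / (2 * z ^ 3)) * |ϑ| := by ring
  rw [key]
  have t1 : ‖(A - (1 - I * (a:ℂ))) * S + (1 - I * (a:ℂ)) * (S - 1 - I * (b:ℂ))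
        + (I * ((b:ℂ) - (a:ℂ)) + (a:ℂ) * (b:ℂ)) + (1 - (Gr:ℂ))‖
      ≤ ‖(A - (1 - I * (a:ℂ))) * S‖
        + ‖(1 - I * (a:ℂ)) * (S - 1 - I * (b:ℂ))‖
        + ‖I * ((b:ℂ) - (a:ℂ)) + (a:ℂ) * (b:ℂ)‖
        + ‖1 - (Gr:ℂ)‖ := by
    calc ‖(A - (1 - I * (a:ℂ))) * S + (1 - I * (a:ℂ)) * (S - 1 - I * (b:ℂ))
          + (I * ((b:ℂ) - (a:ℂ)) + (a:ℂ) * (b:ℂ)) + (1 - (Gr:ℂ))‖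
        ≤ ‖(A - (1 - I * (a:ℂ))) * S + (1 - I * (a:ℂ)) * (S - 1 - I * (b:ℂ))
          + (I * ((b:ℂ) - (a:ℂ)) + (a:ℂ) * (b:ℂ))‖ + ‖1 - (Gr:ℂ)‖ :=
        norm_add_le _ _
      _ ≤ (‖(A - (1 - I * (a:ℂ))) * S + (1 - I * (a:ℂ)) * (S - 1 - I * (b:ℂ))‖
          + ‖I * ((b:ℂ) - (a:ℂ)) + (a:ℂ) * (b:ℂ)‖) + ‖1 - (Gr:ℂ)‖ :=
        add_le_add (norm_add_le _ _) le_rfl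
      _ ≤ ((‖(A - (1 - I * (a:ℂ))) * S‖
          + ‖(1 - I * (a:ℂ)) * (S - 1 - I * (b:ℂ))‖)
          + ‖I * ((b:ℂ) - (a:ℂ)) + (a:ℂ) * (b:ℂ)‖) + ‖1 - (Gr:ℂ)‖ :=
        add_le_add (add_le_add (norm_add_le _ _) le_rfl) le_rfl
      _ = _ := by ring
  refine le_trans t1 ?_
  have p1 : ‖(A - (1 - I * (a:ℂ))) * S‖ ≤ 2 * l ^ 2 * |ϑ| * M := by
    rw [norm_mul]
    exact mul_le_mul hX1a hS_le (norm_nonneg _) (by positivity)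
  have p2 : ‖(1 - I * (a:ℂ)) * (S - 1 - I * (b:ℂ))‖
      ≤ (1 + l / z) * ((2 * l / z + l ^ 2 * M) * |ϑ|) := by
    rw [norm_mul]
    apply mul_le_mul hX2 hmid (norm_nonneg _)
    have := div_nonneg hl0.le hz.le
    linarith
  linarith [p1, p2, hX3, hX4]
end

section
/- For z > 0, λ = e^{-z}, and 0 ≤ ϑ ≤ w^{-1/3} with w ≥ 2 and w/z a positive integer, the function 𝓕(-ϑ, w) = e^{ϑλw} ∑_{k ≤ w/z} λ^k (e^{-ϑ} - 1)^k (w - kz)^k / k! satisfies 𝓕(-ϑ, w) ≪ e^{(λ/2)ϑ²w}, with implied constant depending only on z. -/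
open Real Finset

noncomputable def Ff (z μ : ℝ) (j : ℕ) (w : ℝ) : ℝ :=
  ∑ k ∈ Finset.range (j+1), μ^k * ((k:ℝ)*z - w)^k * Real.exp (μ*(w - k*z)) / (Nat.factorial k)

noncomputable def Dd (z μ : ℝ) (j : ℕ) : ℝ := Ff z μ j ((j:ℝ)*z + z) - Ff z μ j ((j:ℝ)*z)

lemma Ff_zero (z μ w : ℝ) : Ff z μ 0 w = Real.exp (μ*w) := by
  simp [Ff]

lemma hasDerivAt_term (z μ : ℝ) (k : ℕ) (w : ℝ) :
    HasDerivAt (fun w => μ^k * ((k:ℝ)*z - w)^k * Real.exp (μ*(w - k*z)) / (Nat.factorial k))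
      (μ * (μ^k * ((k:ℝ)*z - w)^k * Real.exp (μ*(w - k*z)) / (Nat.factorial k))
        - (k:ℝ) * μ^k * ((k:ℝ)*z - w)^(k-1) * Real.exp (μ*(w - k*z)) / (Nat.factorial k)) w := by
  have h1 : HasDerivAt (fun w : ℝ => ((k:ℝ)*z - w)^k)
      ((k:ℝ) * ((k:ℝ)*z - w)^(k-1) * (-1)) w := ((hasDerivAt_id w).const_sub ((k:ℝ)*z)).pow k
  have h2 : HasDerivAt (fun w : ℝ => Real.exp (μ*(w - (k:ℝ)*z)))
      (Real.exp (μ*(w - (k:ℝ)*z)) * (μ * 1)) w :=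
    (((hasDerivAt_id w).sub_const ((k:ℝ)*z)).const_mul μ).exp
  have h3 : HasDerivAt (fun x => μ^k * (((k:ℝ)*z - x)^k * Real.exp (μ*(x - (k:ℝ)*z))) / (Nat.factorial k))
      (μ^k * ((k:ℝ) * ((k:ℝ)*z - w)^(k-1) * (-1) * Real.exp (μ*(w - (k:ℝ)*z))
        + ((k:ℝ)*z - w)^k * (Real.exp (μ*(w - (k:ℝ)*z)) * (μ * 1))) / (Nat.factorial k)) w :=
    ((h1.mul h2).const_mul (μ^k)).div_const ((Nat.factorial k : ℝ))
  convert h3 using 1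
  · funext x; ring
  · ring

lemma hasDerivAt_Ff_succ (z μ : ℝ) (j : ℕ) (w : ℝ) :
    HasDerivAt (Ff z μ (j+1)) (μ * (Ff z μ (j+1) w - Ff z μ j (w - z))) w := by
  have h := HasDerivAt.sum (fun k (_ : k ∈ Finset.range (j+2)) => hasDerivAt_term z μ k w)
  have e : ∑ k ∈ Finset.range (j+2),
      (μ * (μ^k * ((k:ℝ)*z - w)^k * Real.exp (μ*(w - k*z)) / (Nat.factorial k))
        - (k:ℝ) * μ^k * ((k:ℝ)*z - w)^(k-1) * Real.exp (μ*(w - k*z)) / (Nat.factorial k))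
      = μ * (Ff z μ (j+1) w - Ff z μ j (w - z)) := by
    rw [Finset.sum_sub_distrib, ← Finset.mul_sum]
    have e2 : ∑ k ∈ Finset.range (j+2),
        (k:ℝ) * μ^k * ((k:ℝ)*z - w)^(k-1) * Real.exp (μ*(w - k*z)) / (Nat.factorial k)
        = μ * Ff z μ j (w - z) := by
      rw [Finset.sum_range_succ' (fun k =>
        (k:ℝ) * μ^k * ((k:ℝ)*z - w)^(k-1) * Real.exp (μ*(w - k*z)) / (Nat.factorial k)) (j+1)]
      simp only [Nat.cast_zero, zero_mul, pow_zero, zero_div, add_zero, Nat.cast_ofNat]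
      rw [Ff, Finset.mul_sum]
      apply Finset.sum_congr rfl
      intro i _
      have hfac : ((Nat.factorial (i+1) : ℝ)) = ((i:ℝ)+1) * (Nat.factorial i : ℝ) := by
        rw [Nat.factorial_succ]; push_cast; ring
      have hne : ((i:ℝ)+1) ≠ 0 := by positivity
      have hfne : ((Nat.factorial i : ℝ)) ≠ 0 := by
        exact_mod_cast Nat.factorial_ne_zero i
      have harg : ((i+1 : ℕ):ℝ)*z - w = (i:ℝ)*z - (w - z) := by push_cast; ring
      have harg2 : μ*(w - ((i+1:ℕ):ℝ)*z) = μ*((w-z) - (i:ℝ)*z) := by push_cast; ring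
      rw [harg, harg2, hfac]
      push_cast
      field_simp
      ring
    rw [e2, mul_sub]
    simp [Ff]
  rw [e] at h
  exact h.congr_of_eventuallyEq (Filter.Eventually.of_forall fun x => by rw [Finset.sum_apply]; rfl)

lemma Ff_junction (z μ : ℝ) (j : ℕ) : Ff z μ (j+1) ((j:ℝ)*z + z) = Ff z μ j ((j:ℝ)*z + z) := by
  rw [Ff, Finset.sum_range_succ]
  have : ((j+1:ℕ):ℝ)*z - ((j:ℝ)*z + z) = 0 := by push_cast; ring
  rw [this, zero_pow (Nat.succ_ne_zero j)]
  simp [Ff]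

lemma hasDerivAt_aux (z μ : ℝ) (j : ℕ) (C : ℝ) (w : ℝ) :
    HasDerivAt (fun w => Real.exp (-(μ*w)) * (Ff z μ (j+1) w - C))
      (Real.exp (-(μ*w)) * (μ * (C - Ff z μ j (w - z)))) w := by
  have h1 : HasDerivAt (fun w : ℝ => Real.exp (-(μ*w))) (Real.exp (-(μ*w)) * (-μ)) w := by
    have := (((hasDerivAt_id w).const_mul μ).neg).exp
    simpa using this
  have h2 : HasDerivAt (fun w => Ff z μ (j+1) w - C)
      (μ * (Ff z μ (j+1) w - Ff z μ j (w - z))) w := (hasDerivAt_Ff_succ z μ j w).sub_const C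
  have h3 : HasDerivAt (fun w => Real.exp (-(μ*w)) * (Ff z μ (j+1) w - C))
      (Real.exp (-(μ*w)) * (-μ) * (Ff z μ (j+1) w - C)
        + Real.exp (-(μ*w)) * (μ * (Ff z μ (j+1) w - Ff z μ j (w - z)))) w := h1.mul h2
  convert h3 using 1
  ring

lemma Ff_mono (z μ : ℝ) (hz : 0 < z) (hμ : 0 ≤ μ) :
    ∀ j : ℕ, MonotoneOn (Ff z μ j) (Set.Icc ((j:ℝ)*z) ((j:ℝ)*z + z)) := by
  intro j
  induction j with
  | zero =>
    intro a _ b _ hab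
    rw [Ff_zero, Ff_zero]
    exact Real.exp_le_exp.2 (mul_le_mul_of_nonneg_left hab hμ)
  | succ j ih =>
    set a : ℝ := (j:ℝ)*z + z with ha
    have hcast : ((j+1:ℕ):ℝ)*z = a := by push_cast; ring
    set C : ℝ := Ff z μ (j+1) a with hC
    -- h1 : F_j (w - z) ≤ C for w ∈ [a, a+z]
    have h1 : ∀ w ∈ Set.Icc a (a+z), Ff z μ j (w - z) ≤ C := by
      intro w hw
      have hm : w - z ∈ Set.Icc ((j:ℝ)*z) ((j:ℝ)*z + z) := by
        constructor <;> [linarith [hw.1]; linarith [hw.2]]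
      have := ih hm (Set.right_mem_Icc.2 (by linarith)) (by linarith [hw.2])
      calc Ff z μ j (w - z) ≤ Ff z μ j ((j:ℝ)*z + z) := this
        _ = C := (Ff_junction z μ j).symm
    -- φ := exp(-μw)(F_{j+1} w - C) is monotone on [a, a+z]
    have hφ : MonotoneOn (fun w => Real.exp (-(μ*w)) * (Ff z μ (j+1) w - C)) (Set.Icc a (a+z)) := by
      apply monotoneOn_of_deriv_nonneg (convex_Icc _ _)
      · exact fun x _ => ((hasDerivAt_aux z μ j C x).continuousAt).continuousWithinAt
      · intro x _
        exact ((hasDerivAt_aux z μ j C x).differentiableAt).differentiableWithinAt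
      · intro x hx
        rw [interior_Icc] at hx
        rw [(hasDerivAt_aux z μ j C x).deriv]
        have := h1 x (Set.mem_Icc.2 ⟨le_of_lt hx.1, le_of_lt hx.2⟩)
        have h0 : 0 ≤ μ * (C - Ff z μ j (x - z)) := mul_nonneg hμ (by linarith)
        positivity
    -- so F_{j+1} w ≥ C on [a, a+z]
    have h2 : ∀ w ∈ Set.Icc a (a+z), C ≤ Ff z μ (j+1) w := by
      intro w hw
      have h3 := hφ (Set.left_mem_Icc.2 (by linarith)) hw hw.1
      simp only at h3
      have h4 : Ff z μ (j+1) a - C = 0 := by rw [hC]; ring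
      rw [h4, mul_zero] at h3
      nlinarith [Real.exp_pos (-(μ*w))]
    -- deriv F_{j+1} ≥ 0 on [a, a+z]
    rw [hcast]
    apply monotoneOn_of_deriv_nonneg (convex_Icc _ _)
    · exact fun x _ => ((hasDerivAt_Ff_succ z μ j x).continuousAt).continuousWithinAt
    · intro x _
      exact ((hasDerivAt_Ff_succ z μ j x).differentiableAt).differentiableWithinAt
    · intro x hx
      rw [interior_Icc] at hx
      rw [(hasDerivAt_Ff_succ z μ j x).deriv]
      have hxm : x ∈ Set.Icc a (a+z) := Set.mem_Icc.2 ⟨le_of_lt hx.1, le_of_lt hx.2⟩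
      have := h1 x hxm
      have := h2 x hxm
      have : 0 ≤ Ff z μ (j+1) x - Ff z μ j (x - z) := by linarith
      exact mul_nonneg hμ this

lemma Dd_nonneg (z μ : ℝ) (hz : 0 < z) (hμ : 0 ≤ μ) (j : ℕ) : 0 ≤ Dd z μ j := by
  have := Ff_mono z μ hz hμ j (Set.left_mem_Icc.2 (by linarith))
    (Set.right_mem_Icc.2 (by linarith)) (by linarith)
  rw [Dd]; linarith

lemma Dd_zero (z μ : ℝ) : Dd z μ 0 = Real.exp (μ*z) - 1 := by
  rw [Dd, Ff_zero, Ff_zero]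
  norm_num

lemma Dd_succ_le (z μ : ℝ) (hz : 0 < z) (hμ : 0 ≤ μ) (j : ℕ) :
    Dd z μ (j+1) ≤ (Real.exp (μ*z) - 1) * Dd z μ j := by
  set a : ℝ := (j:ℝ)*z + z with ha
  set C : ℝ := Ff z μ (j+1) a - Dd z μ j with hC
  have hψ : AntitoneOn (fun w => Real.exp (-(μ*w)) * (Ff z μ (j+1) w - C)) (Set.Icc a (a+z)) := by
    apply antitoneOn_of_deriv_nonpos (convex_Icc _ _)
    · exact fun x _ => ((hasDerivAt_aux z μ j C x).continuousAt).continuousWithinAt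
    · intro x _
      exact ((hasDerivAt_aux z μ j C x).differentiableAt).differentiableWithinAt
    · intro x hx
      rw [interior_Icc] at hx
      rw [(hasDerivAt_aux z μ j C x).deriv]
      have hm : x - z ∈ Set.Icc ((j:ℝ)*z) ((j:ℝ)*z + z) := by
        constructor <;> [linarith [hx.1]; linarith [hx.2]]
      have h1 : Ff z μ j ((j:ℝ)*z) ≤ Ff z μ j (x - z) :=
        Ff_mono z μ hz hμ j (Set.left_mem_Icc.2 (by linarith)) hm (by linarith [hx.1])
      have h2 : C - Ff z μ j (x - z) ≤ 0 := by
        rw [hC, Ff_junction z μ j]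
        have : Dd z μ j = Ff z μ j a - Ff z μ j ((j:ℝ)*z) := by rw [Dd]
        rw [this]
        linarith
      have h3 : μ * (C - Ff z μ j (x - z)) ≤ 0 := mul_nonpos_of_nonneg_of_nonpos hμ h2
      have h4 := Real.exp_pos (-(μ*x))
      nlinarith
  have h5 := hψ (Set.left_mem_Icc.2 (by linarith)) (Set.right_mem_Icc.2 (by linarith)) (by linarith)
  simp only at h5
  have hD1 : Dd z μ (j+1) = Ff z μ (j+1) (a+z) - Ff z μ (j+1) a := by
    rw [Dd]
    have h6 : ((j+1:ℕ):ℝ)*z = a := by push_cast; ring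
    rw [h6]
  have hCa : Ff z μ (j+1) a - C = Dd z μ j := by rw [hC]; ring
  have hCaz : Ff z μ (j+1) (a+z) - C = Dd z μ (j+1) + Dd z μ j := by rw [hD1] at *; rw [hC]; ring
  rw [hCa, hCaz] at h5
  have hea : Real.exp (-(μ*(a+z))) = Real.exp (-(μ*a)) * Real.exp (-(μ*z)) := by
    rw [← Real.exp_add]; ring_nf
  rw [hea] at h5
  have hpa := Real.exp_pos (-(μ*a))
  have hpz := Real.exp_pos (-(μ*z))
  have h7 : Real.exp (-(μ*z)) * (Dd z μ (j+1) + Dd z μ j) ≤ Dd z μ j := by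
    rw [mul_assoc] at h5
    exact le_of_mul_le_mul_left h5 hpa
  have h8 : Real.exp (-(μ*z)) * Real.exp (μ*z) = 1 := by
    rw [← Real.exp_add]; norm_num
  have h9 := mul_le_mul_of_nonneg_left h7 (Real.exp_pos (μ*z)).le
  have h10 : Real.exp (μ*z) * (Real.exp (-(μ*z)) * (Dd z μ (j+1) + Dd z μ j))
      = Dd z μ (j+1) + Dd z μ j := by
    rw [← mul_assoc, mul_comm (Real.exp (μ*z)), h8, one_mul]
  rw [h10] at h9
  nlinarith

lemma Ff_val (z μ : ℝ) : ∀ j : ℕ, Ff z μ j ((j:ℝ)*z) = 1 + ∑ i ∈ Finset.range j, Dd z μ i := by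
  intro j
  induction j with
  | zero => simp [Ff_zero]
  | succ j ih =>
    have h6 : ((j+1:ℕ):ℝ)*z = (j:ℝ)*z + z := by push_cast; ring
    rw [h6, Ff_junction z μ j, Finset.sum_range_succ, Dd]
    rw [ih]
    ring

lemma exp_35_lt : Real.exp (3/5) < 11/6 := by
  have h1 : Real.exp (3/5) ^ 5 = Real.exp 3 := by
    rw [← Real.exp_nat_mul]; norm_num
  have h2 : Real.exp 3 = Real.exp 1 ^ 3 := by
    rw [← Real.exp_nat_mul]; norm_num
  have h3 : Real.exp 1 ^ 3 < 2.7182818286 ^ 3 := by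
    exact pow_lt_pow_left₀ Real.exp_one_lt_d9 (Real.exp_pos 1).le (by norm_num)
  have h4 : (2.7182818286:ℝ) ^ 3 < (11/6:ℝ)^5 := by norm_num
  have h5 : Real.exp (3/5) ^ 5 < (11/6:ℝ)^5 := by rw [h1, h2]; linarith
  exact lt_of_pow_lt_pow_left₀ 5 (by norm_num) h5

-- e^{-x} ≤ 1 - x + x^2/2 for x ≥ 0
lemma exp_neg_le_quad {x : ℝ} (hx : 0 ≤ x) : Real.exp (-x) ≤ 1 - x + x^2/2 := by
  have key : MonotoneOn (fun x : ℝ => 1 - x + x^2/2 - Real.exp (-x)) (Set.Ici 0) := by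
    apply monotoneOn_of_deriv_nonneg (convex_Ici _)
    · fun_prop
    · fun_prop
    · intro t ht
      rw [interior_Ici] at ht
      have hd : HasDerivAt (fun x : ℝ => 1 - x + x^2/2 - Real.exp (-x))
          (-1 + t + Real.exp (-t)) t := by
        have h1 : HasDerivAt (fun x : ℝ => Real.exp (-x)) (-Real.exp (-t)) t := by
          simpa using ((hasDerivAt_id t).neg).exp
        have h2a : HasDerivAt (fun x : ℝ => x^2/2) t t := by
          have := (hasDerivAt_pow 2 t).div_const 2
          norm_num at this
          exact this
        have h2 : HasDerivAt (fun x : ℝ => 1 - x + x^2/2) (-1 + t) t := by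
          exact ((hasDerivAt_id t).const_sub 1).add h2a
        have h3 : HasDerivAt (fun x : ℝ => 1 - x + x^2/2 - Real.exp (-x))
            (-1 + t - -Real.exp (-t)) t := h2.sub h1
        convert h3 using 1
        ring
      rw [hd.deriv]
      have := Real.add_one_le_exp (-t)
      linarith
  have h0 := key (Set.self_mem_Ici) (Set.mem_Ici.2 hx) hx
  simp at h0
  linarith [h0]

lemma z_exp_neg_le (z : ℝ) (hz : 0 < z) : z * Real.exp (-z) ≤ Real.exp (-1) := by
  have h1 : z ≤ Real.exp (z - 1) := by
    have := Real.add_one_le_exp (z - 1)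
    linarith
  calc z * Real.exp (-z) ≤ Real.exp (z-1) * Real.exp (-z) :=
        mul_le_mul_of_nonneg_right h1 (Real.exp_pos _).le
    _ = Real.exp (-1) := by rw [← Real.exp_add]; ring_nf

lemma aux_final (e ϑ μ w : ℝ) (h : e * (ϑ - ϑ^2/2) ≤ μ) (hw : 0 ≤ w) :
    ϑ * e * w + -(μ * w) ≤ e / 2 * ϑ^2 * w := by nlinarith

set_option maxHeartbeats 1000000 in
/-- Laplace transform bound (14) in the negative direction,
`𝓕(-ϑ, w) = e^{ϑλw} ∑_{k ≤ w/z} λ^k (e^{-ϑ}-1)^k (w-kz)^k/k! ≪ e^{(λ/2)ϑ²w}`. -/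
theorem stmt_16 (z : ℝ) (hz : 0 < z) :
    ∃ C > 0, ∀ (K : ℕ), 1 ≤ K → ∀ w ϑ : ℝ, w = K * z → 2 ≤ w →
      0 ≤ ϑ → ϑ ≤ w ^ (-(1 : ℝ)/3) →
      |Real.exp (ϑ * Real.exp (-z) * w) *
          ∑ k ∈ Finset.range (K + 1),
            Real.exp (-z) ^ k * (Real.exp (-ϑ) - 1) ^ k * (w - k * z) ^ k
              / (Nat.factorial k)|
        ≤ C * Real.exp ((Real.exp (-z) / 2) * ϑ ^ 2 * w) := by
  refine ⟨6, by norm_num, ?_⟩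
  intro K hK w ϑ hw hw2 hϑ0 hϑw
  have hw0 : (0:ℝ) < w := by linarith
  -- ϑ^3 ≤ 1/2
  have hcube : ϑ^3 ≤ 1/2 := by
    have hr : (w ^ (-(1:ℝ)/3))^(3:ℕ) = w⁻¹ := by
      rw [← Real.rpow_natCast (w ^ (-(1:ℝ)/3)) 3, ← Real.rpow_mul hw0.le]
      rw [show ((-(1:ℝ)/3)*((3:ℕ):ℝ)) = -1 by push_cast; norm_num, Real.rpow_neg_one]
    have h1 : ϑ^3 ≤ (w ^ (-(1:ℝ)/3))^(3:ℕ) := pow_le_pow_left₀ hϑ0 hϑw 3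
    have h2 : w⁻¹ ≤ 1/2 := by
      rw [inv_le_comm₀ (by linarith) (by norm_num)]
      linarith
    calc ϑ^3 ≤ (w ^ (-(1:ℝ)/3))^(3:ℕ) := h1
      _ = w⁻¹ := hr
      _ ≤ 1/2 := h2
  -- ϑ ≤ (3/5) e^{2/5}
  have hϑb : ϑ ≤ (3/5) * Real.exp (2/5) := by
    have hexp35 : (8/5:ℝ) ≤ Real.exp (3/5) := by
      have := Real.add_one_le_exp (3/5 : ℝ); linarith
    have h65 : Real.exp (2/5)^(3:ℕ) = Real.exp (3/5)^(2:ℕ) := by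
      rw [← Real.exp_nat_mul, ← Real.exp_nat_mul]; norm_num
    have hc3 : (1/2:ℝ) ≤ ((3/5) * Real.exp (2/5))^(3:ℕ) := by
      rw [mul_pow, h65]
      have h0 : (8/5:ℝ)^(2:ℕ) ≤ Real.exp (3/5)^(2:ℕ) := pow_le_pow_left₀ (by norm_num) hexp35 2
      norm_num at h0 ⊢
      nlinarith
    refine le_of_pow_le_pow_left₀ (n := 3) (by norm_num) (by positivity) ?_
    calc ϑ^3 ≤ 1/2 := hcube
      _ ≤ _ := hc3
  -- the target value for IVT
  set atar : ℝ := z * (Real.exp (-z) * (1 - Real.exp (-ϑ))) with hatar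
  have hθpos : 0 ≤ 1 - Real.exp (-ϑ) := by
    have : Real.exp (-ϑ) ≤ 1 := Real.exp_le_one_iff.2 (by linarith)
    linarith
  have hatar0 : 0 ≤ atar := by positivity
  have hatarle : atar ≤ (3/5) * Real.exp (-(3/5)) := by
    have h1 : 1 - Real.exp (-ϑ) ≤ ϑ := by
      have := Real.add_one_le_exp (-ϑ); linarith
    have h2 : atar ≤ Real.exp (-1) * ϑ := by
      have hze := z_exp_neg_le z hz
      have : atar = (z * Real.exp (-z)) * (1 - Real.exp (-ϑ)) := by rw [hatar]; ring
      rw [this]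
      have := mul_le_mul hze h1 hθpos (Real.exp_pos (-1)).le
      calc (z * Real.exp (-z)) * (1 - Real.exp (-ϑ)) ≤ Real.exp (-1) * ϑ := this
        _ ≤ Real.exp (-1) * ϑ := le_refl _
    calc atar ≤ Real.exp (-1) * ϑ := h2
      _ ≤ Real.exp (-1) * ((3/5) * Real.exp (2/5)) :=
          mul_le_mul_of_nonneg_left hϑb (Real.exp_pos (-1)).le
      _ = (3/5) * (Real.exp (-1) * Real.exp (2/5)) := by ring
      _ = (3/5) * Real.exp (-(3/5)) := by rw [← Real.exp_add]; norm_num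
  -- IVT to get ρ with ρ e^{-ρ} = atar, ρ ∈ [0, 3/5]
  have hivt : atar ∈ (fun ρ : ℝ => ρ * Real.exp (-ρ)) '' Set.Icc 0 (3/5) := by
    apply intermediate_value_Icc (by norm_num : (0:ℝ) ≤ 3/5)
      (Continuous.continuousOn (by continuity))
    rw [Set.mem_Icc]
    have hg0 : (0:ℝ) * Real.exp (-(0:ℝ)) = 0 := by norm_num
    constructor
    · rw [hg0]; exact hatar0
    · exact hatarle
  obtain ⟨ρ, hρmem, hρeq⟩ := hivt
  obtain ⟨μ, hμdef⟩ : ∃ μ : ℝ, μ = ρ / z := ⟨ρ/z, rfl⟩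
  have hμ0 : 0 ≤ μ := hμdef ▸ div_nonneg hρmem.1 hz.le
  have hμz : μ * z = ρ := by rw [hμdef]; field_simp
  have hρ35 : μ * z ≤ 3/5 := by rw [hμz]; exact hρmem.2
  have hc : μ * Real.exp (-(μ*z)) = Real.exp (-z) * (1 - Real.exp (-ϑ)) := by
    have h1 : ρ * Real.exp (-ρ) = atar := hρeq
    rw [hatar] at h1
    have h2 : μ * Real.exp (-(μ*z)) * z = ρ * Real.exp (-ρ) := by
      rw [hμz, mul_comm (μ * Real.exp (-ρ)) z, ← mul_assoc]
      rw [show z * μ = ρ by rw [mul_comm]; exact hμz]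
    have hzne : z ≠ 0 := ne_of_gt hz
    have := h2.trans h1
    field_simp at this ⊢
    nlinarith [this]
  -- key identity
  have hkey : Real.exp (μ*w) * (∑ k ∈ Finset.range (K + 1),
      Real.exp (-z) ^ k * (Real.exp (-ϑ) - 1) ^ k * (w - k * z) ^ k / (Nat.factorial k))
      = Ff z μ K w := by
    rw [Finset.mul_sum, Ff]
    apply Finset.sum_congr rfl
    intro k _
    have hbase : Real.exp (-z) * (Real.exp (-ϑ) - 1) = -(μ * Real.exp (-(μ*z))) := by
      rw [hc]; ring
    have h1 : Real.exp (-z)^k * (Real.exp (-ϑ) - 1)^k = (-(μ * Real.exp (-(μ*z))))^k := by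
      rw [← mul_pow, hbase]
    have hcomb : (-(μ * Real.exp (-(μ*z))))^k * (w - (k:ℝ)*z)^k
        = (μ * Real.exp (-(μ*z)))^k * ((k:ℝ)*z - w)^k := by
      rw [← mul_pow, ← mul_pow]
      congr 1
      ring
    have hE : Real.exp (-(μ*z))^k * Real.exp (μ*w) = Real.exp (μ*(w - (k:ℝ)*z)) := by
      rw [← Real.exp_nat_mul, ← Real.exp_add]
      congr 1
      ring
    calc Real.exp (μ*w) * (Real.exp (-z)^k * (Real.exp (-ϑ) - 1)^k * (w - (k:ℝ) * z)^k
          / (Nat.factorial k))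
        = (Real.exp (-z)^k * (Real.exp (-ϑ) - 1)^k * (w - (k:ℝ)*z)^k) * Real.exp (μ*w)
          / (Nat.factorial k) := by ring
      _ = ((-(μ * Real.exp (-(μ*z))))^k * (w - (k:ℝ)*z)^k) * Real.exp (μ*w)
          / (Nat.factorial k) := by rw [h1]
      _ = ((μ * Real.exp (-(μ*z)))^k * ((k:ℝ)*z - w)^k) * Real.exp (μ*w)
          / (Nat.factorial k) := by rw [hcomb]
      _ = μ^k * ((k:ℝ)*z - w)^k * (Real.exp (-(μ*z))^k * Real.exp (μ*w))
          / (Nat.factorial k) := by rw [mul_pow]; ring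
      _ = μ^k * ((k:ℝ)*z - w)^k * Real.exp (μ*(w - (k:ℝ)*z)) / (Nat.factorial k) := by rw [hE]
  -- bounds on V
  have hDb : ∀ i : ℕ, Dd z μ i ≤ (5/6:ℝ)^(i+1) := by
    intro i
    have hq : Real.exp (μ*z) - 1 ≤ 5/6 := by
      have h1 : Real.exp (μ*z) ≤ Real.exp (3/5) := Real.exp_le_exp.2 hρ35
      have := exp_35_lt
      linarith
    induction i with
    | zero => rw [Dd_zero]; norm_num; linarith
    | succ i ih =>
      calc Dd z μ (i+1) ≤ (Real.exp (μ*z) - 1) * Dd z μ i := Dd_succ_le z μ hz hμ0 i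
        _ ≤ (5/6) * (5/6:ℝ)^(i+1) := by
            apply mul_le_mul hq ih (Dd_nonneg z μ hz hμ0 i) (by norm_num)
        _ = (5/6:ℝ)^(i+2) := by rw [pow_succ]; ring
  have hsum : ∑ i ∈ Finset.range K, Dd z μ i ≤ 5 := by
    have h1 : ∑ i ∈ Finset.range K, Dd z μ i ≤ ∑ i ∈ Finset.range K, (5/6:ℝ)^(i+1) :=
      Finset.sum_le_sum (fun i _ => hDb i)
    have h2 : ∑ i ∈ Finset.range K, (5/6:ℝ)^(i+1) = (∑ i ∈ Finset.range K, (5/6:ℝ)^i) * (5/6) := by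
      rw [Finset.sum_mul]
      exact Finset.sum_congr rfl (fun i _ => pow_succ _ _)
    have h3 : ∑ i ∈ Finset.range K, (5/6:ℝ)^i ≤ 6 := by
      rw [geom_sum_eq (by norm_num : (5/6:ℝ) ≠ 1)]
      have h4 : (0:ℝ) ≤ (5/6:ℝ)^K := by positivity
      have h5 : ((5/6:ℝ)^K - 1)/((5/6:ℝ)-1) = 6*(1 - (5/6:ℝ)^K) := by ring
      rw [h5]; linarith
    calc ∑ i ∈ Finset.range K, Dd z μ i ≤ (∑ i ∈ Finset.range K, (5/6:ℝ)^i) * (5/6) := by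
          rw [← h2]; exact h1
      _ ≤ 6 * (5/6) := by nlinarith [h3]
      _ = 5 := by norm_num
  obtain ⟨V, hV⟩ : ∃ V : ℝ, V = Ff z μ K ((K:ℝ)*z) := ⟨_, rfl⟩
  have hVval : V = 1 + ∑ i ∈ Finset.range K, Dd z μ i := by rw [hV]; exact Ff_val z μ K
  have hV1 : 1 ≤ V := by
    rw [hVval]
    have := Finset.sum_nonneg (fun i (_ : i ∈ Finset.range K) => Dd_nonneg z μ hz hμ0 i)
    linarith
  have hV6 : V ≤ 6 := by rw [hVval]; linarith
  -- μ lower bound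
  have hμlow : Real.exp (-z) * (ϑ - ϑ^2/2) ≤ μ := by
    have h1 : Real.exp (-z) * (1 - Real.exp (-ϑ)) ≤ μ := by
      rw [← hc]
      have h2 : Real.exp (-(μ*z)) ≤ 1 :=
        Real.exp_le_one_iff.2 (neg_nonpos.2 (mul_nonneg hμ0 hz.le))
      calc μ * Real.exp (-(μ*z)) ≤ μ * 1 := mul_le_mul_of_nonneg_left h2 hμ0
        _ = μ := mul_one μ
    have h3 : ϑ - ϑ^2/2 ≤ 1 - Real.exp (-ϑ) := by
      have := exp_neg_le_quad hϑ0
      linarith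
    have h4 : Real.exp (-z) * (ϑ - ϑ^2/2) ≤ Real.exp (-z) * (1 - Real.exp (-ϑ)) :=
      mul_le_mul_of_nonneg_left h3 (Real.exp_pos (-z)).le
    linarith
  -- final assembly
  have hSig : (∑ k ∈ Finset.range (K + 1),
      Real.exp (-z) ^ k * (Real.exp (-ϑ) - 1) ^ k * (w - k * z) ^ k / (Nat.factorial k))
      = Real.exp (-(μ*w)) * V := by
    have hexpne : Real.exp (μ*w) ≠ 0 := ne_of_gt (Real.exp_pos _)
    have h1 : Ff z μ K w = V := by rw [hV, hw]
    rw [← h1, ← hkey, ← mul_assoc, ← Real.exp_add,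
      show -(μ*w) + μ*w = 0 by ring, Real.exp_zero, one_mul]
  rw [hSig]
  have hV0 : (0:ℝ) < V := lt_of_lt_of_le one_pos hV1
  have hpos : 0 < Real.exp (ϑ * Real.exp (-z) * w) * (Real.exp (-(μ*w)) * V) :=
    mul_pos (Real.exp_pos _) (mul_pos (Real.exp_pos _) hV0)
  rw [abs_of_pos hpos]
  have hexp2 : Real.exp (ϑ * Real.exp (-z) * w) * Real.exp (-(μ*w))
      ≤ Real.exp ((Real.exp (-z) / 2) * ϑ ^ 2 * w) := by
    rw [← Real.exp_add]
    apply Real.exp_le_exp.2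
    exact aux_final (Real.exp (-z)) ϑ μ w hμlow hw0.le
  calc Real.exp (ϑ * Real.exp (-z) * w) * (Real.exp (-(μ*w)) * V)
      = (Real.exp (ϑ * Real.exp (-z) * w) * Real.exp (-(μ*w))) * V := by ring
    _ ≤ Real.exp ((Real.exp (-z) / 2) * ϑ ^ 2 * w) * 6 := by
        apply mul_le_mul hexp2 hV6 (by linarith) (Real.exp_pos _).le
    _ = 6 * Real.exp ((Real.exp (-z) / 2) * ϑ ^ 2 * w) := by ring
end

section
/- Let α > 0, τ real, ν > 0, z > 0, w > 0 with ν(w + αz) = α. For s = α + iτ, H(s) := Γ(s)/{ν(w + sz)}^s satisfies |H(s)| ≪ e^{-α}/√α uniformly in τ with |τ| ≤ w², where the implied constant is absolute (assuming α ≥ 1, νz ≤ 1/2). -/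
open Complex Real

lemma my_arg_eq_arctan {x : ℂ} (hx : 0 < x.re) : x.arg = Real.arctan (x.im / x.re) := by
  rw [Complex.arg_of_re_nonneg hx.le, Real.arctan_eq_arcsin]
  have hS : (0:ℝ) < x.re^2 + x.im^2 := by positivity
  have habs : ‖x‖ = Real.sqrt (x.re^2 + x.im^2) := by
    rw [Complex.norm_def, Complex.normSq_apply]; ring_nf
  have h1 : (1 : ℝ) + (x.im/x.re)^2 = (x.re^2 + x.im^2)/x.re^2 := by
    field_simp
  have h2 : Real.sqrt (1 + (x.im/x.re)^2) = Real.sqrt (x.re^2+x.im^2) / x.re := by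
    rw [h1, Real.sqrt_div hS.le, Real.sqrt_sq hx.le]
  rw [habs, h2]
  have hs : Real.sqrt (x.re^2 + x.im^2) ≠ 0 := by positivity
  field_simp

noncomputable def Gaux (τ y : ℝ) : ℝ := y * Real.log (1 + τ^2/y^2) - 2*τ*Real.arctan (τ/y)

lemma hasDerivAt_Gaux (τ : ℝ) {y : ℝ} (hy : 0 < y) :
    HasDerivAt (Gaux τ) (Real.log (1 + τ^2/y^2)) y := by
  have hy2 : (y:ℝ)^2 ≠ 0 := by positivity
  have hpos : (0:ℝ) < 1 + τ^2/y^2 := by positivity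
  have h1 : HasDerivAt (fun y : ℝ => 1 + τ^2/y^2) (τ^2 * (-(2*y^1)/(y^2)^2)) y := by
    exact (((hasDerivAt_pow 2 y).inv hy2).const_mul (τ^2)).const_add 1
  have h2 : HasDerivAt (fun y : ℝ => Real.log (1 + τ^2/y^2))
      (τ^2 * (-(2*y^1)/(y^2)^2) / (1 + τ^2/y^2)) y := h1.log hpos.ne'
  have h3 : HasDerivAt (fun y : ℝ => y * Real.log (1 + τ^2/y^2))
      (1 * Real.log (1 + τ^2/y^2) + y * (τ^2 * (-(2*y^1)/(y^2)^2) / (1 + τ^2/y^2))) y :=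
    (hasDerivAt_id y).mul h2
  have h4 : HasDerivAt (fun y : ℝ => τ/y) (τ * (-1/y^2)) y := by
    simpa [div_eq_mul_inv] using ((hasDerivAt_id y).inv hy.ne').const_mul τ
  have h5 : HasDerivAt (fun y : ℝ => 2*τ*Real.arctan (τ/y))
      (2*τ*((1/(1+(τ/y)^2)) * (τ * (-1/y^2)))) y := by
    exact ((Real.hasDerivAt_arctan (τ/y)).comp y h4).const_mul (2*τ)
  have := h3.sub h5
  refine this.congr_deriv ?_
  have h6 : (0:ℝ) < 1 + (τ/y)^2 := by positivity
  field_simp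
  ring

lemma contOn (τ : ℝ) {a b : ℝ} (ha : 0 < a) :
    ContinuousOn (fun t => Real.log (1 + τ^2/t^2)) (Set.Icc a b) := by
  intro t ht
  have ht0 : 0 < t := lt_of_lt_of_le ha ht.1
  have : HasDerivAt (fun t => Real.log (1 + τ^2/t^2))
      (τ^2 * (-(2*t^1)/(t^2)^2) / (1 + τ^2/t^2)) t := by
    have hpos : (0:ℝ) < 1 + τ^2/t^2 := by positivity
    exact ((((hasDerivAt_pow 2 t).inv (by positivity)).const_mul (τ^2)).const_add 1).log hpos.ne'
  exact this.continuousAt.continuousWithinAt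

lemma Gaux_succ_le (τ : ℝ) {y : ℝ} (hy : 0 < y) :
    Gaux τ (y+1) - Gaux τ y ≤ Real.log (1 + τ^2/y^2) := by
  have hle : y ≤ y + 1 := by linarith
  have hint : IntervalIntegrable (fun t => Real.log (1+τ^2/t^2)) MeasureTheory.volume y (y+1) := by
    apply ContinuousOn.intervalIntegrable
    rw [Set.uIcc_of_le hle]
    exact contOn τ hy
  have heq := intervalIntegral.integral_eq_sub_of_hasDerivAt
    (f := Gaux τ) (f' := fun t => Real.log (1+τ^2/t^2))
    (fun t ht => by
      rw [Set.uIcc_of_le hle] at ht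
      exact hasDerivAt_Gaux τ (lt_of_lt_of_le hy ht.1)) hint
  rw [← heq]
  calc (∫ t in y..(y+1), Real.log (1+τ^2/t^2))
      ≤ ∫ _t in y..(y+1), Real.log (1+τ^2/y^2) := by
        apply intervalIntegral.integral_mono_on hle hint intervalIntegrable_const
        intro t ht
        have ht0 : 0 < t := lt_of_lt_of_le hy ht.1
        have : τ^2/t^2 ≤ τ^2/y^2 := by
          apply div_le_div_of_nonneg_left (by positivity) (by positivity)
          gcongr
          exact ht.1
        have hp : (0:ℝ) < 1 + τ^2/t^2 := by positivity
        exact Real.log_le_log hp (by linarith)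
    _ = Real.log (1+τ^2/y^2) := by simp

lemma sum_ge (τ α : ℝ) (hα : 0 < α) (n : ℕ) :
    Gaux τ (α + (n+1)) - Gaux τ α ≤ ∑ j ∈ Finset.range (n+1), Real.log (1 + τ^2/(α+j)^2) := by
  have h := Finset.sum_range_sub (fun j : ℕ => Gaux τ (α + j)) (n+1)
  have : Gaux τ (α + (n+1)) - Gaux τ α
      = ∑ j ∈ Finset.range (n+1), (Gaux τ (α + (j+1)) - Gaux τ (α + j)) := by
    rw [show Gaux τ (α + ((n:ℝ)+1)) - Gaux τ α
        = Gaux τ (α + ((n+1:ℕ):ℝ)) - Gaux τ (α + ((0:ℕ):ℝ)) by push_cast; ring_nf,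
      ← h]
    apply Finset.sum_congr rfl
    intro j _
    push_cast
    ring_nf
  rw [this]
  apply Finset.sum_le_sum
  intro j _
  have hpos : 0 < α + j := by positivity
  have := Gaux_succ_le τ hpos
  calc Gaux τ (α + (j+1)) - Gaux τ (α+j) = Gaux τ ((α+j)+1) - Gaux τ (α+j) := by ring_nf
    _ ≤ Real.log (1 + τ^2/(α+j)^2) := this

lemma Gaux_tendsto (τ α : ℝ) :
    Filter.Tendsto (fun n : ℕ => Gaux τ (α + (n+1))) Filter.atTop (nhds 0) := by
  have hA : Filter.Tendsto (fun n : ℕ => α + ((n:ℝ)+1)) Filter.atTop Filter.atTop := by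
    apply Filter.tendsto_atTop_add_const_left
    exact Filter.tendsto_atTop_add_const_right _ _ tendsto_natCast_atTop_atTop
  have hG : Filter.Tendsto (fun y : ℝ => Gaux τ y) Filter.atTop (nhds 0) := by
    have h2 : Filter.Tendsto (fun y : ℝ => 2*τ*Real.arctan (τ/y)) Filter.atTop (nhds 0) := by
      have : Filter.Tendsto (fun y : ℝ => τ/y) Filter.atTop (nhds 0) :=
        Filter.Tendsto.div_atTop (tendsto_const_nhds (α := ℝ) (f := Filter.atTop (α := ℝ))) Filter.tendsto_id
      have := ((Real.continuous_arctan.tendsto 0).comp this).const_mul (2*τ)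
      simpa using this
    have h1 : Filter.Tendsto (fun y : ℝ => y * Real.log (1 + τ^2/y^2)) Filter.atTop (nhds 0) := by
      apply tendsto_of_tendsto_of_tendsto_of_le_of_le' tendsto_const_nhds
        (Filter.Tendsto.div_atTop (tendsto_const_nhds (x := τ^2)) Filter.tendsto_id)
      · filter_upwards [Filter.eventually_gt_atTop 0] with y hy
        have : (0:ℝ) ≤ Real.log (1 + τ^2/y^2) := Real.log_nonneg (by
          have h9 : (0:ℝ) ≤ τ^2/y^2 := by positivity
          linarith)
        positivity
      · filter_upwards [Filter.eventually_gt_atTop 0] with y hy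
        have hp : (0:ℝ) < 1 + τ^2/y^2 := by positivity
        have hlog : Real.log (1 + τ^2/y^2) ≤ τ^2/y^2 := by
          have := Real.log_le_sub_one_of_pos hp
          linarith
        calc y * Real.log (1 + τ^2/y^2) ≤ y * (τ^2/y^2) := by
              apply mul_le_mul_of_nonneg_left hlog hy.le
          _ = τ^2/y := by field_simp
    have := h1.sub h2
    simpa [Gaux] using this
  exact hG.comp hA

lemma abs_GammaSeq_le (α τ : ℝ) (hα : 0 < α) {n : ℕ} (hn : 1 ≤ n) :
    ‖Complex.GammaSeq ((α:ℂ) + I*τ) n‖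
      ≤ Real.GammaSeq α n * Real.exp (-(Gaux τ (α+(n+1)) - Gaux τ α)/2) := by
  set s : ℂ := (α:ℂ) + I*τ with hs
  have hsre : s.re = α := by simp [hs]
  have habs_term : ∀ j : ℕ, ‖s + j‖
      = (α+j) * Real.exp (Real.log (1 + τ^2/(α+j)^2) / 2) := by
    intro j
    have hpos : (0:ℝ) < α + j := by positivity
    have h1 : (0:ℝ) < 1 + τ^2/(α+j)^2 := by positivity
    have hsq : Real.exp (Real.log (1 + τ^2/(α+j)^2) / 2) = Real.sqrt (1 + τ^2/(α+j)^2) := by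
      rw [← Real.log_sqrt h1.le, Real.exp_log (Real.sqrt_pos.mpr h1)]
    rw [hsq]
    have h2 : ‖s+j‖ = Real.sqrt ((α+j)^2 + τ^2) := by
      rw [Complex.norm_def, Complex.normSq_apply]
      congr 1
      simp [hs]
      ring
    rw [h2, show (α+(j:ℝ))^2 + τ^2 = (α+j)^2 * (1 + τ^2/(α+j)^2) by field_simp,
      Real.sqrt_mul (by positivity), Real.sqrt_sq hpos.le]
  have hprod : ‖∏ j ∈ Finset.range (n+1), (s + j)‖
      = (∏ j ∈ Finset.range (n+1), (α+(j:ℝ)))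
        * Real.exp ((∑ j ∈ Finset.range (n+1), Real.log (1 + τ^2/(α+j)^2))/2) := by
    rw [norm_prod]
    rw [Finset.sum_div, Real.exp_sum, ← Finset.prod_mul_distrib]
    exact Finset.prod_congr rfl fun j _ => habs_term j
  have hB : (0:ℝ) < ∏ j ∈ Finset.range (n+1), (α+(j:ℝ)) :=
    Finset.prod_pos fun j _ => by positivity
  have hcast : ((n:ℕ):ℂ) = (((n:ℝ)):ℂ) := by push_cast; rfl
  have habs_pow : ‖(n:ℂ) ^ s‖ = (n:ℝ) ^ α := by
    rw [hcast, Complex.norm_cpow_eq_rpow_re_of_pos (by positivity : (0:ℝ) < (n:ℝ)), hsre]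
  rw [Complex.GammaSeq, norm_div, norm_mul, habs_pow, Complex.norm_natCast, hprod, Real.GammaSeq]
  set A : ℝ := (n:ℝ)^α * (n.factorial : ℝ)
  set B : ℝ := ∏ j ∈ Finset.range (n+1), (α+(j:ℝ))
  set S : ℝ := ∑ j ∈ Finset.range (n+1), Real.log (1 + τ^2/(α+j)^2)
  set T : ℝ := Gaux τ (α+(n+1)) - Gaux τ α
  have hTS : T ≤ S := sum_ge τ α hα n
  have hA : 0 ≤ A := by positivity
  calc A / (B * Real.exp (S/2)) ≤ A / (B * Real.exp (T/2)) := by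
        gcongr
    _ = A / B * Real.exp (-T/2) := by
        rw [div_mul_eq_div_div, div_eq_mul_inv (A/B), ← Real.exp_neg]
        ring_nf

lemma abs_Gamma_le (α τ : ℝ) (hα : 0 < α) :
    ‖Complex.Gamma ((α:ℂ) + I*τ)‖ ≤ Real.Gamma α * Real.exp (Gaux τ α / 2) := by
  have h1 : Filter.Tendsto (fun n => ‖Complex.GammaSeq ((α:ℂ) + I*τ) n‖)
      Filter.atTop (nhds ‖Complex.Gamma ((α:ℂ) + I*τ)‖) :=
    (continuous_norm.tendsto _).comp (Complex.GammaSeq_tendsto_Gamma _)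
  have h2 : Filter.Tendsto
      (fun n : ℕ => Real.GammaSeq α n * Real.exp (-(Gaux τ (α+(n+1)) - Gaux τ α)/2))
      Filter.atTop (nhds (Real.Gamma α * Real.exp (Gaux τ α / 2))) := by
    apply Filter.Tendsto.mul (Real.GammaSeq_tendsto_Gamma α)
    have := (((Gaux_tendsto τ α).sub_const (Gaux τ α)).neg.div_const 2)
    have h3 := (Real.continuous_exp.tendsto _).comp this
    simpa [Function.comp_def] using h3
  apply le_of_tendsto_of_tendsto h1 h2
  filter_upwards [Filter.eventually_ge_atTop 1] with n hn
  exact abs_GammaSeq_le α τ hα hn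

lemma E_le_D (α τ b : ℝ) (hα : 0 < α) (hb0 : 0 ≤ b) (hb1 : b ≤ 1) :
    Gaux τ α / 2 ≤ (α/2) * Real.log (1 + b^2*τ^2/α^2) - τ * Real.arctan (b*τ/α) := by
  set f : ℝ → ℝ := fun b => (α/2) * Real.log (1 + b^2*τ^2/α^2) - τ * Real.arctan (b*τ/α) with hf
  have hderiv : ∀ b : ℝ, HasDerivAt f ((τ^2/α)*(b-1)/(1+b^2*τ^2/α^2)) b := by
    intro b
    have hp : (0:ℝ) < 1 + b^2*τ^2/α^2 := by positivity
    have h1 : HasDerivAt (fun b : ℝ => 1 + b^2*τ^2/α^2) ((τ^2/α^2)*((2:ℕ)*b^1)) b := by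
      have h0 : (fun b : ℝ => 1 + b^2*τ^2/α^2) = fun b : ℝ => (τ^2/α^2)*b^2 + 1 := by
        funext x; ring
      rw [h0]
      exact ((hasDerivAt_pow 2 b).const_mul (τ^2/α^2)).add_const 1
    have h2 : HasDerivAt (fun b : ℝ => (α/2) * Real.log (1 + b^2*τ^2/α^2))
        ((α/2) * ((τ^2/α^2)*((2:ℕ)*b^1) / (1 + b^2*τ^2/α^2))) b := (h1.log hp.ne').const_mul (α/2)
    have h3 : HasDerivAt (fun b : ℝ => b*τ/α) (τ/α) b := by
      have h0 : (fun b : ℝ => b*τ/α) = fun b : ℝ => (τ/α)*b := by funext x; ring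
      rw [h0]
      simpa using (hasDerivAt_id b).const_mul (τ/α)
    have h4 : HasDerivAt (fun b : ℝ => τ * Real.arctan (b*τ/α))
        (τ * ((1/(1+(b*τ/α)^2)) * (τ/α))) b := by exact
      ((Real.hasDerivAt_arctan (b*τ/α)).comp b h3).const_mul τ
    have h5 := h2.sub h4
    refine h5.congr_deriv ?_
    have hq : (0:ℝ) < 1 + (b*τ/α)^2 := by positivity
    have hbq : 1 + (b*τ/α)^2 = 1 + b^2*τ^2/α^2 := by ring
    rw [← hbq]
    field_simp
    ring
  have hanti : AntitoneOn f (Set.Icc 0 1) := by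
    apply antitoneOn_of_deriv_nonpos (convex_Icc 0 1)
    · exact Continuous.continuousOn (by
        have : ∀ b, HasDerivAt f _ b := hderiv
        exact continuous_iff_continuousAt.mpr fun b => (hderiv b).continuousAt)
    · intro b _
      exact (hderiv b).differentiableAt.differentiableWithinAt
    · intro b hb
      rw [interior_Icc] at hb
      rw [(hderiv b).deriv]
      have hp : (0:ℝ) < 1 + b^2*τ^2/α^2 := by positivity
      apply div_nonpos_of_nonpos_of_nonneg _ hp.le
      have : b - 1 ≤ 0 := by linarith [hb.2]
      have h9 : 0 ≤ τ^2/α := by positivity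
      exact mul_nonpos_of_nonneg_of_nonpos h9 this
  have key := hanti (Set.mem_Icc.mpr ⟨hb0, hb1⟩) (Set.mem_Icc.mpr ⟨zero_le_one, le_refl 1⟩) hb1
  have hf1 : f 1 = Gaux τ α / 2 := by
    simp only [hf, Gaux]
    rw [show (1:ℝ)^2*τ^2/α^2 = τ^2/α^2 by ring, show (1:ℝ)*τ/α = τ/α by ring]
    ring
  rw [← hf1]
  exact key

lemma factorial_le (n : ℕ) (hn : 1 ≤ n) :
    (n.factorial : ℝ) ≤ Real.exp 1 * Real.sqrt n * ((n:ℝ)/Real.exp 1)^n := by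
  obtain ⟨m, rfl⟩ := Nat.exists_eq_add_of_le hn
  have h1 : Stirling.stirlingSeq (1+m) ≤ Stirling.stirlingSeq 1 := by
    have := Stirling.log_stirlingSeq'_antitone (Nat.zero_le m)
    simp only [Function.comp_apply, Nat.succ_eq_add_one, Nat.zero_add] at this
    have hpos1 := Stirling.stirlingSeq'_pos 0
    have hposm := Stirling.stirlingSeq'_pos m
    simp only [Nat.zero_add] at hpos1 hposm
    rw [Real.log_le_log_iff hposm hpos1] at this
    convert this using 2
    omega
  have h2 : Stirling.stirlingSeq 1 = Real.exp 1 / Real.sqrt 2 := Stirling.stirlingSeq_one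
  set n := 1 + m with hn'
  have hnpos : (0:ℝ) < n := by positivity
  have hden : (0:ℝ) < Real.sqrt (2*n) * ((n:ℝ)/Real.exp 1)^n := by positivity
  have h3 : (n.factorial : ℝ) = Stirling.stirlingSeq n * (Real.sqrt (2*n) * ((n:ℝ)/Real.exp 1)^n) := by
    rw [Stirling.stirlingSeq]
    field_simp
  rw [h3]
  have h4 : Stirling.stirlingSeq n * (Real.sqrt (2*n) * ((n:ℝ)/Real.exp 1)^n)
      ≤ (Real.exp 1 / Real.sqrt 2) * (Real.sqrt (2*n) * ((n:ℝ)/Real.exp 1)^n) := by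
    apply mul_le_mul_of_nonneg_right _ hden.le
    rw [← h2]; exact h1
  refine h4.trans (le_of_eq ?_)
  rw [show (2*(n:ℝ)) = 2 * n by ring, Real.sqrt_mul (by norm_num : (0:ℝ) ≤ 2)]
  have hs2 : Real.sqrt 2 ≠ 0 := by positivity
  field_simp

lemma Gamma_nat_le (n : ℕ) (hn : 1 ≤ n) :
    Real.Gamma n ≤ Real.exp 1 * (n:ℝ) ^ ((n:ℝ) - 1/2 : ℝ) * Real.exp (-(n:ℝ)) := by
  have hnpos : (0:ℝ) < n := by exact_mod_cast n.pos_of_ne_zero (by omega)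
  obtain ⟨m, rfl⟩ : ∃ m, n = m + 1 := ⟨n - 1, by omega⟩
  set N : ℝ := ((m+1:ℕ):ℝ) with hN
  have hNpos : (0:ℝ) < N := hnpos
  have hΓ : Real.Gamma N = (m.factorial : ℝ) := by
    rw [hN, show ((m+1:ℕ):ℝ) = (m:ℝ)+1 by push_cast; ring, Real.Gamma_nat_eq_factorial m]
  rw [hΓ]
  have hfac : ((m+1).factorial : ℝ) = N * (m.factorial:ℝ) := by
    rw [Nat.factorial_succ, hN]; push_cast; ring
  have hle := factorial_le (m+1) (by omega)
  rw [hfac] at hle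
  have hmf : (m.factorial : ℝ) ≤ Real.exp 1 * Real.sqrt N * (N/Real.exp 1)^(m+1) / N := by
    rw [le_div_iff₀ hNpos]
    calc (m.factorial:ℝ) * N = N * (m.factorial:ℝ) := by ring
      _ ≤ Real.exp 1 * Real.sqrt N * (N/Real.exp 1)^(m+1) := hle
  refine hmf.trans (le_of_eq ?_)
  have hpow : (N/Real.exp 1)^(m+1) = N ^ (((m+1:ℕ)):ℝ) * Real.exp (-N) := by
    rw [div_pow, ← Real.rpow_natCast N (m+1), Real.exp_one_pow, hN, Real.exp_neg,
      div_eq_mul_inv]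
  rw [hpow]
  have hsq : Real.sqrt N * Real.sqrt N = N := Real.mul_self_sqrt hNpos.le
  have hss : Real.sqrt N / N = 1 / Real.sqrt N := by
    rw [div_eq_div_iff hNpos.ne' (by positivity : Real.sqrt N ≠ 0)]
    simp [hsq]
  have hrp : N ^ (N - 1/2 : ℝ) = N ^ (((m+1:ℕ)):ℝ) / Real.sqrt N := by
    rw [Real.rpow_sub hNpos, ← Real.sqrt_eq_rpow, hN]
  rw [hrp]
  calc Real.exp 1 * Real.sqrt N * (N ^ (((m+1:ℕ)):ℝ) * Real.exp (-N)) / N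
      = Real.exp 1 * (N ^ (((m+1:ℕ)):ℝ) * Real.exp (-N)) * (Real.sqrt N / N) := by ring
    _ = Real.exp 1 * (N ^ (((m+1:ℕ)):ℝ) * Real.exp (-N)) * (1 / Real.sqrt N) := by rw [hss]
    _ = Real.exp 1 * (N ^ (((m+1:ℕ)):ℝ) / Real.sqrt N) * Real.exp (-N) := by ring

lemma gamma_stirling (α : ℝ) (hα : 1 ≤ α) :
    Real.Gamma α ≤ Real.exp 2 * α ^ (α - 1/2 : ℝ) * Real.exp (-α) := by
  set n : ℕ := ⌊α⌋₊ with hn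
  have hn1 : 1 ≤ n := Nat.le_floor (by exact_mod_cast hα)
  have hnα : (n:ℝ) ≤ α := Nat.floor_le (by linarith)
  have hαn : α < n + 1 := Nat.lt_floor_add_one α
  have hnpos : (0:ℝ) < n := by exact_mod_cast Nat.lt_of_lt_of_le Nat.zero_lt_one hn1
  set t : ℝ := α - n with ht
  have ht0 : 0 ≤ t := by simp [ht]; linarith
  have ht1 : t < 1 := by simp [ht]; linarith
  -- log-convexity interpolation : Γ(α) ≤ Γ(n) * n ^ t
  have hΓn : 0 < Real.Gamma n := Real.Gamma_pos_of_pos hnpos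
  have hΓn1 : Real.Gamma ((n:ℝ)+1) = n * Real.Gamma n := Real.Gamma_add_one hnpos.ne'
  have hinterp : Real.Gamma α ≤ Real.Gamma n * (n:ℝ) ^ (t:ℝ) := by
    rcases eq_or_lt_of_le ht0 with h | h
    · have : α = n := by rw [ht] at h; linarith [h.symm]
      rw [this, ← h]
      simp [Real.rpow_zero]
    · have hconv := Real.convexOn_log_Gamma.2 (Set.mem_Ioi.mpr hnpos)
        (Set.mem_Ioi.mpr (by positivity : (0:ℝ) < (n:ℝ)+1))
        (by linarith : (0:ℝ) ≤ 1 - t) (le_of_lt h) (by ring)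
      simp only [smul_eq_mul, Function.comp_apply] at hconv
      have hxy : (1-t) * (n:ℝ) + t * ((n:ℝ)+1) = α := by rw [ht]; ring
      rw [hxy] at hconv
      have hlog : Real.log (Real.Gamma α) ≤ Real.log (Real.Gamma n) + t * Real.log n := by
        rw [hΓn1, Real.log_mul (by positivity) hΓn.ne'] at hconv
        calc Real.log (Real.Gamma α) ≤ (1-t) * Real.log (Real.Gamma n)
              + t * (Real.log n + Real.log (Real.Gamma n)) := hconv
          _ = Real.log (Real.Gamma n) + t * Real.log n := by ring
      have hΓα : 0 < Real.Gamma α := Real.Gamma_pos_of_pos (by linarith)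
      calc Real.Gamma α = Real.exp (Real.log (Real.Gamma α)) := (Real.exp_log hΓα).symm
        _ ≤ Real.exp (Real.log (Real.Gamma n) + t * Real.log n) := Real.exp_le_exp.mpr hlog
        _ = Real.Gamma n * (n:ℝ) ^ (t:ℝ) := by
            rw [Real.exp_add, Real.exp_log hΓn, Real.rpow_def_of_pos hnpos]
            ring_nf
  have hΓnat : Real.Gamma n ≤ Real.exp 1 * (n:ℝ) ^ ((n:ℝ) - 1/2) * Real.exp (-(n:ℝ)) :=
    Gamma_nat_le n hn1
  have hne : (n:ℝ) ^ ((n:ℝ) - 1/2) * (n:ℝ) ^ (t:ℝ) = (n:ℝ) ^ (α - 1/2 : ℝ) := by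
    rw [← Real.rpow_add hnpos]
    congr 1
    rw [ht]; ring
  have hmono : (n:ℝ) ^ (α - 1/2 : ℝ) ≤ α ^ (α - 1/2 : ℝ) :=
    Real.rpow_le_rpow hnpos.le hnα (by linarith)
  have hexp : Real.exp (-(n:ℝ)) ≤ Real.exp 1 * Real.exp (-α) := by
    rw [← Real.exp_add]
    apply Real.exp_le_exp.mpr
    rw [ht] at ht1
    linarith
  calc Real.Gamma α ≤ Real.Gamma n * (n:ℝ) ^ (t:ℝ) := hinterp
    _ ≤ (Real.exp 1 * (n:ℝ) ^ ((n:ℝ) - 1/2) * Real.exp (-(n:ℝ))) * (n:ℝ) ^ (t:ℝ) := by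
        apply mul_le_mul_of_nonneg_right hΓnat (by positivity)
    _ = Real.exp 1 * ((n:ℝ) ^ ((n:ℝ) - 1/2) * (n:ℝ) ^ (t:ℝ)) * Real.exp (-(n:ℝ)) := by ring
    _ = Real.exp 1 * (n:ℝ) ^ (α - 1/2 : ℝ) * Real.exp (-(n:ℝ)) := by rw [hne]
    _ ≤ Real.exp 1 * α ^ (α - 1/2 : ℝ) * (Real.exp 1 * Real.exp (-α)) := by
        apply mul_le_mul (by apply mul_le_mul_of_nonneg_left hmono (by positivity)) hexp
          (by positivity) (by positivity)
    _ = Real.exp 2 * α ^ (α - 1/2 : ℝ) * Real.exp (-α) := by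
        rw [show Real.exp 2 = Real.exp 1 * Real.exp 1 by rw [← Real.exp_add]; norm_num]
        ring

/-- saddle-point bound `|H(s)| ≪ e^{-α}/√α` on the line `Re s = α`,
where `H(s) = Γ(s)/{ν(w+sz)}^s` and `ν(w+αz) = α`, uniformly for `|τ| ≤ w²`. -/
theorem stmt_17 :
    ∃ C > 0, ∀ α τ ν z w : ℝ, 1 ≤ α → 0 < ν → 0 < z → 0 < w →
      ν * (w + α * z) = α → ν * z ≤ 1/2 → |τ| ≤ w ^ 2 →
      ‖(Complex.Gamma ((α : ℂ) + I * τ)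
          / ((ν : ℂ) * ((w : ℂ) + ((α : ℂ) + I * τ) * z)) ^ ((α : ℂ) + I * τ))‖
        ≤ C * Real.exp (-α) / Real.sqrt α := by
  refine ⟨Real.exp 2, Real.exp_pos 2, ?_⟩
  intro α τ ν z w hα hν hz hw hrel hb hτ
  have hα0 : (0:ℝ) < α := by linarith
  set b : ℝ := ν * z with hbdef
  have hb0 : 0 ≤ b := by positivity
  have hb1 : b ≤ 1 := by rw [hbdef]; linarith
  -- rewrite the base
  have hrC : ((ν * (w + α * z) : ℝ) : ℂ) = ((α:ℝ):ℂ) := by exact_mod_cast congrArg Complex.ofReal hrel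
  have hbase : (ν:ℂ) * ((w:ℂ) + ((α:ℂ) + I*τ) * z) = (α:ℂ) + ((b*τ:ℝ):ℂ)*I := by
    simp only [hbdef]
    push_cast at hrC ⊢
    linear_combination hrC
  rw [hbase, norm_div]
  set s : ℂ := (α:ℂ) + I*τ with hs
  set c : ℂ := (α:ℂ) + ((b*τ:ℝ):ℂ)*I with hc
  have hcre : c.re = α := by simp [hc]
  have hcim : c.im = b*τ := by simp [hc]
  have hsre : s.re = α := by simp [hs]
  have hsim : s.im = τ := by simp [hs]
  have hc0 : c ≠ 0 := by
    intro h
    rw [Complex.ext_iff] at h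
    rw [hcre] at h
    simpa using absurd h.1 (by norm_num; linarith)
  set L : ℝ := Real.log (1 + b^2*τ^2/α^2) with hL
  have hLpos : (0:ℝ) < 1 + b^2*τ^2/α^2 := by positivity
  have habsc : ‖c‖ = α * Real.exp (L/2) := by
    have hsq : Real.exp (L/2) = Real.sqrt (1 + b^2*τ^2/α^2) := by
      rw [hL, ← Real.log_sqrt hLpos.le, Real.exp_log (Real.sqrt_pos.mpr hLpos)]
    rw [hsq]
    have h2 : ‖c‖ = Real.sqrt (α^2 + (b*τ)^2) := by
      rw [Complex.norm_def, Complex.normSq_apply, hcre, hcim]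
      congr 1; ring
    rw [h2, show α^2 + (b*τ)^2 = α^2 * (1 + b^2*τ^2/α^2) by field_simp,
      Real.sqrt_mul (by positivity), Real.sqrt_sq hα0.le]
  set D : ℝ := (α/2) * L - τ * Real.arctan (b*τ/α) with hD
  have habscs : ‖c ^ s‖ = α ^ (α:ℝ) * Real.exp D := by
    rw [Complex.norm_cpow_of_ne_zero hc0, hsre, hsim, habsc,
      my_arg_eq_arctan (by rw [hcre]; exact hα0), hcre, hcim,
      Real.mul_rpow hα0.le (Real.exp_pos _).le,
      Real.rpow_def_of_pos (Real.exp_pos _), Real.log_exp]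
    rw [mul_div_assoc, ← Real.exp_sub]
    congr 1
    rw [hD]
    ring
  have hnum : ‖Complex.Gamma s‖ ≤ Real.Gamma α * Real.exp D := by
    refine (abs_Gamma_le α τ hα0).trans ?_
    have := E_le_D α τ b hα0 hb0 hb1
    have h9 : Gaux τ α / 2 ≤ D := by rw [hD, hL]; exact this
    exact mul_le_mul_of_nonneg_left (Real.exp_le_exp.mpr h9) (Real.Gamma_pos_of_pos hα0).le
  have hpow_pos : (0:ℝ) < α ^ (α:ℝ) := Real.rpow_pos_of_pos hα0 _
  have hquot : ‖Complex.Gamma s‖ / ‖c ^ s‖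
      ≤ Real.Gamma α / α ^ (α:ℝ) := by
    rw [habscs]
    calc ‖Complex.Gamma s‖ / (α ^ (α:ℝ) * Real.exp D)
        ≤ (Real.Gamma α * Real.exp D) / (α ^ (α:ℝ) * Real.exp D) := by
          apply div_le_div_of_nonneg_right hnum (by positivity)
      _ = Real.Gamma α / α ^ (α:ℝ) := by
          rw [mul_div_mul_right _ _ (Real.exp_pos D).ne']
  refine hquot.trans ?_
  -- final Stirling step
  have hst := gamma_stirling α hα
  have hid : Real.exp 2 * α ^ (α - 1/2 : ℝ) * Real.exp (-α) / α ^ (α:ℝ)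
      = Real.exp 2 * Real.exp (-α) / Real.sqrt α := by
    rw [Real.rpow_sub hα0, ← Real.sqrt_eq_rpow]
    have hsα : Real.sqrt α ≠ 0 := by positivity
    field_simp
  calc Real.Gamma α / α ^ (α:ℝ)
      ≤ (Real.exp 2 * α ^ (α - 1/2 : ℝ) * Real.exp (-α)) / α ^ (α:ℝ) := by
        apply div_le_div_of_nonneg_right hst hpow_pos.le
    _ = Real.exp 2 * Real.exp (-α) / Real.sqrt α := hid
end
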